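/- arXiv:2503.01188 — 7 statements merged into one kernel-verified Lean document; each statement's English description precedes it below -/
import Mathlib

section
/- Let X be a class of objects in an abelian category A, and suppose X1 → X2 → X3 → ⋯ is a direct system in A in which every transition map is a split monomorphism. If each Xi belongs to X and X is closed under direct sums and direct summands, then the direct limit colim Xi belongs to X. -/
open CategoryTheory Category Limits ZeroObject

universe v u

namespace Paper

variable {A : Type u} [Category.{v} A] [Abelian A]

/-- Chain complexes over `A` indexed by `ℤ` (homological convention). -/
abbrev Cx (A : Type u) [Category.{v} A] [Abelian A] := ChainComplex A ℤ

/-- A chain map is null homotopic if it is homotopic to the zero map. -/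
def NullHomotopic {X Y : Cx A} (f : X ⟶ Y) : Prop := Nonempty (Homotopy f 0)

/-- A complex is contractible if its identity is null homotopic. -/
def Contractible (X : Cx A) : Prop := Nonempty (Homotopy (𝟙 X) (0 : X ⟶ X))

/-- `Hom_A(X, E)` is exact at degree `n` for every `X ∈ 𝒳`. -/
def RightAcyclicAt (𝒳 : Set A) (E : Cx A) (n : ℤ) : Prop :=
  ∀ ⦃X : A⦄, X ∈ 𝒳 → ∀ g : X ⟶ E.X n, g ≫ E.d n (n - 1) = 0 →
    ∃ h : X ⟶ E.X (n + 1), h ≫ E.d (n + 1) n = g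

/-- The complex `E` is right `𝒳`-acyclic. -/
def RightAcyclic (𝒳 : Set A) (E : Cx A) : Prop := ∀ n : ℤ, RightAcyclicAt 𝒳 E n

/-- `Hom_A(E, Y)` is exact at (cohomological) degree `n` for every `Y ∈ 𝒴`. -/
def LeftAcyclicAt (𝒴 : Set A) (E : Cx A) (n : ℤ) : Prop :=
  ∀ ⦃Y : A⦄, Y ∈ 𝒴 → ∀ g : E.X n ⟶ Y, E.d (n + 1) n ≫ g = 0 →
    ∃ h : E.X (n - 1) ⟶ Y, E.d n (n - 1) ≫ h = g

/-- The complex `E` is left `𝒴`-acyclic. -/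
def LeftAcyclic (𝒴 : Set A) (E : Cx A) : Prop := ∀ n : ℤ, LeftAcyclicAt 𝒴 E n

/-- `f : X ⟶ M` is a right `𝒳`-approximation of `M`. -/
def IsRightApprox (𝒳 : Set A) {X M : A} (f : X ⟶ M) : Prop :=
  ∀ ⦃X' : A⦄, X' ∈ 𝒳 → ∀ g : X' ⟶ M, ∃ h : X' ⟶ X, h ≫ f = g

/-- `f : M ⟶ Y` is a left `𝒴`-approximation of `M`. -/
def IsLeftApprox (𝒴 : Set A) {M Y : A} (f : M ⟶ Y) : Prop :=
  ∀ ⦃Y' : A⦄, Y' ∈ 𝒴 → ∀ g : M ⟶ Y', ∃ h : Y ⟶ Y', f ≫ h = g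

/-- `R` is an augmented `𝒳`-resolution of `M`:  `⋯ → X₁ → X₀ → M → 0`, with the
`𝒳`-objects placed in degrees `≥ 0` and `M` in degree `-1`. -/
def IsAugXRes (𝒳 : Set A) (M : A) (R : Cx A) : Prop :=
  (∀ n : ℤ, 0 ≤ n → R.X n ∈ 𝒳) ∧ (∀ n : ℤ, n < -1 → IsZero (R.X n)) ∧
    Nonempty (R.X (-1) ≅ M)

/-- `R` is an augmented `𝒴`-coresolution of `M`: `0 → M → Y⁰ → Y¹ → ⋯`, with `M` in
degree `0` and the `𝒴`-objects in degrees `≤ -1`. -/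
def IsAugYCores (𝒴 : Set A) (M : A) (R : Cx A) : Prop :=
  (∀ n : ℤ, n ≤ -1 → R.X n ∈ 𝒴) ∧ (∀ n : ℤ, 0 < n → IsZero (R.X n)) ∧
    Nonempty (R.X 0 ≅ M)

/-- A balanced pair `(𝒳, 𝒴)` of (full additive, isomorphism- and summand-closed)
subcategories of `A`. -/
structure BalancedPair (𝒳 𝒴 : Set A) : Prop where
  isoClosedX : ∀ ⦃X X' : A⦄, X ∈ 𝒳 → (X ≅ X') → X' ∈ 𝒳
  isoClosedY : ∀ ⦃Y Y' : A⦄, Y ∈ 𝒴 → (Y ≅ Y') → Y' ∈ 𝒴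
  summandClosedX : ∀ ⦃X S : A⦄, X ∈ 𝒳 → ∀ (s : S ⟶ X) (r : X ⟶ S), s ≫ r = 𝟙 S → S ∈ 𝒳
  summandClosedY : ∀ ⦃Y S : A⦄, Y ∈ 𝒴 → ∀ (s : S ⟶ Y) (r : Y ⟶ S), s ≫ r = 𝟙 S → S ∈ 𝒴
  contravariantlyFinite : ∀ M : A, ∃ X ∈ 𝒳, ∃ f : X ⟶ M, IsRightApprox 𝒳 f
  covariantlyFinite : ∀ M : A, ∃ Y ∈ 𝒴, ∃ f : M ⟶ Y, IsLeftApprox 𝒴 f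
  resolution : ∀ M : A, ∃ R : Cx A, IsAugXRes 𝒳 M R ∧ RightAcyclic 𝒳 R ∧ LeftAcyclic 𝒴 R
  coresolution : ∀ M : A, ∃ R : Cx A, IsAugYCores 𝒴 M R ∧ RightAcyclic 𝒳 R ∧ LeftAcyclic 𝒴 R

/-- The balanced pair `(𝒳, 𝒴)` is admissible: every right `𝒳`-approximation is epic and
every left `𝒴`-approximation is monic. -/
def Admissible (𝒳 𝒴 : Set A) : Prop :=
  (∀ ⦃X M : A⦄, X ∈ 𝒳 → ∀ f : X ⟶ M, IsRightApprox 𝒳 f → Epi f) ∧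
  (∀ ⦃M Y : A⦄, Y ∈ 𝒴 → ∀ f : M ⟶ Y, IsLeftApprox 𝒴 f → Mono f)

/-- A short exact sequence of `A` belonging to the exact structure `E` induced by `𝒳`:
it is exact and remains exact after applying `Hom_A(X, -)` for every `X ∈ 𝒳`. -/
def EExact (𝒳 : Set A) {D W C : A} (i : D ⟶ W) (p : W ⟶ C) : Prop :=
  ∃ w : i ≫ p = 0, (ShortComplex.mk i p w).ShortExact ∧
    ∀ ⦃X : A⦄, X ∈ 𝒳 → ∀ g : X ⟶ C, ∃ h : X ⟶ W, h ≫ p = g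

/-- A short exact sequence of complexes which is degreewise in `E`. -/
def ChEExact (𝒳 : Set A) {D W C : Cx A} (i : D ⟶ W) (p : W ⟶ C) : Prop :=
  ∀ n : ℤ, EExact 𝒳 (i.f n) (p.f n)

/-- Vanishing of `Ext¹` in the exact category `Ch(A, E)`: every admissible short exact
sequence `0 → D → W → C → 0` in `Ch(A, E)` splits. -/
def Ext1ChVanish (𝒳 : Set A) (C D : Cx A) : Prop :=
  ∀ ⦃W : Cx A⦄ (i : D ⟶ W) (p : W ⟶ C), ChEExact 𝒳 i p → ∃ r : W ⟶ D, i ≫ r = 𝟙 D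

/-- The class `Ẽ` of right `𝒳`-acyclic complexes. -/
def Etilde (𝒳 : Set A) : Set (Cx A) := {E | RightAcyclic 𝒳 E}

/-- The class `E-dw X̃` of complexes with all terms in `𝒳`. -/
def dwX (𝒳 : Set A) : Set (Cx A) := {G | ∀ n : ℤ, G.X n ∈ 𝒳}

/-- The class `E-dg X̃`: complexes with terms in `𝒳` such that every chain map to a right
`𝒳`-acyclic complex is null homotopic. -/
def EdgX (𝒳 : Set A) : Set (Cx A) :=
  {G | (∀ n : ℤ, G.X n ∈ 𝒳) ∧ ∀ E ∈ Etilde 𝒳, ∀ f : G ⟶ E, NullHomotopic f}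

/-- The right `Ext¹`-orthogonal class of `E-dw X̃` in `Ch(A, E)`. -/
def dwPerp (𝒳 : Set A) : Set (Cx A) := {C | ∀ G ∈ dwX 𝒳, Ext1ChVanish 𝒳 G C}

/-- The class `X̃_E` of right `𝒳`-acyclic complexes all of whose cycles lie in `𝒳`. -/
def XtildeE (𝒳 : Set A) : Set (Cx A) :=
  {G | RightAcyclic 𝒳 G ∧ ∀ n : ℤ, kernel (G.d n (n - 1)) ∈ 𝒳}

/-- The disk complex `Dⁿ(M)`: `M` in degrees `n` and `n - 1`, identity differential. -/
noncomputable def disk (M : A) (n : ℤ) : Cx A where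
  X k := if k = n ∨ k = n - 1 then M else 0
  d i j :=
    if h : i = n ∧ j = n - 1 then
      eqToHom (by simp [h.1, h.2])
    else 0
  shape i j hij := by
    try dsimp only
    rw [dif_neg]
    rintro ⟨rfl, rfl⟩
    exact hij (by rw [ComplexShape.down_Rel]; omega)
  d_comp_d' i j k _ _ := by
    try dsimp only
    by_cases h : j = n ∧ k = n - 1
    · rw [dif_neg (by rintro ⟨-, rfl⟩; omega : ¬(i = n ∧ j = n - 1)), zero_comp]
    · rw [dif_neg h, comp_zero]

/-- The shift `Σᵏ C`, with `(Σᵏ C)ₙ = C_{n-k}` and differential `(-1)ᵏ d`. -/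
@[simps] def shiftC (C : Cx A) (k : ℤ) : Cx A where
  X n := C.X (n - k)
  d i j := (k.negOnePow : ℤ) • C.d (i - k) (j - k)
  shape i j hij := by
    try dsimp only
    rw [C.shape, smul_zero]
    simp only [ComplexShape.down_Rel] at *
    omega
  d_comp_d' i j k _ _ := by
    try dsimp only
    rw [Preadditive.zsmul_comp, Preadditive.comp_zsmul, C.d_comp_d, smul_zero, smul_zero]

/-- Acyclicity of a complex. -/
def AcyclicCx (C : Cx A) : Prop := ∀ n : ℤ, C.ExactAt n

/-- Vanishing of the ordinary `Ext¹` in the abelian category `A`. -/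
def Ext1Vanish (X Z : A) : Prop :=
  ∀ ⦃W : A⦄ (i : Z ⟶ W) (p : W ⟶ X) (w : i ≫ p = 0),
    (ShortComplex.mk i p w).ShortExact → ∃ r : W ⟶ Z, i ≫ r = 𝟙 Z

/-- `(𝒻, 𝒞)` is a cotorsion pair in the abelian category `A`. -/
def CotorsionPair (𝒻 𝒞 : Set A) : Prop :=
  (∀ X : A, X ∈ 𝒻 ↔ ∀ Z ∈ 𝒞, Ext1Vanish X Z) ∧
  (∀ Z : A, Z ∈ 𝒞 ↔ ∀ X ∈ 𝒻, Ext1Vanish X Z)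

/-- Completeness of a cotorsion pair. -/
def CompletePair (𝒻 𝒞 : Set A) : Prop :=
  (∀ M : A, ∃ (Z F : A) (i : Z ⟶ F) (p : F ⟶ M) (w : i ≫ p = 0),
      (ShortComplex.mk i p w).ShortExact ∧ F ∈ 𝒻 ∧ Z ∈ 𝒞) ∧
  (∀ M : A, ∃ (Z F : A) (i : M ⟶ Z) (p : Z ⟶ F) (w : i ≫ p = 0),
      (ShortComplex.mk i p w).ShortExact ∧ Z ∈ 𝒞 ∧ F ∈ 𝒻)

/-- Heredity of a cotorsion pair. -/
def HereditaryPair (𝒻 𝒞 : Set A) : Prop :=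
  (∀ ⦃X Y Z : A⦄ (i : X ⟶ Y) (p : Y ⟶ Z) (w : i ≫ p = 0),
      (ShortComplex.mk i p w).ShortExact → Y ∈ 𝒻 → Z ∈ 𝒻 → X ∈ 𝒻) ∧
  (∀ ⦃X Y Z : A⦄ (i : X ⟶ Y) (p : Y ⟶ Z) (w : i ≫ p = 0),
      (ShortComplex.mk i p w).ShortExact → X ∈ 𝒞 → Y ∈ 𝒞 → Z ∈ 𝒞)

/-- A complete hereditary cotorsion triple `(𝒳, 𝒵, 𝒴)`. -/
def CotorsionTriple (𝒳 𝒵 𝒴 : Set A) : Prop :=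
  CotorsionPair 𝒳 𝒵 ∧ CotorsionPair 𝒵 𝒴 ∧
  CompletePair 𝒳 𝒵 ∧ CompletePair 𝒵 𝒴 ∧
  HereditaryPair 𝒳 𝒵 ∧ HereditaryPair 𝒵 𝒴


/-- If `X₁ → X₂ → ⋯` is a direct system with split monic transition maps,
all terms in a class `𝒳` closed under isomorphisms, direct summands and (countable) direct
sums, then the colimit lies in `𝒳`. -/
theorem stmt_0 {A : Type u} [Category.{v} A] [Abelian A] [HasColimits A]
    (𝒳 : Set A)
    (isoClosed : ∀ ⦃X X' : A⦄, X ∈ 𝒳 → (X ≅ X') → X' ∈ 𝒳)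
    (summandClosed : ∀ ⦃X S : A⦄, X ∈ 𝒳 → ∀ (s : S ⟶ X) (r : X ⟶ S), s ≫ r = 𝟙 S → S ∈ 𝒳)
    (sumClosed : ∀ g : ℕ → A, (∀ i, g i ∈ 𝒳) → (∐ g) ∈ 𝒳)
    (F : ℕ ⥤ A) (hX : ∀ i : ℕ, F.obj i ∈ 𝒳)
    (hsplit : ∀ i : ℕ, IsSplitMono (F.map (homOfLE (Nat.le_succ i)))) :
    colimit F ∈ 𝒳 := by
  classical
  -- transition maps and chosen retractions
  set s : ∀ i : ℕ, F.obj i ⟶ F.obj (i + 1) :=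
    fun i => F.map (homOfLE (Nat.le_succ i)) with hs
  haveI : ∀ i, IsSplitMono (s i) := hsplit
  let ρ : ∀ i : ℕ, F.obj (i + 1) ⟶ F.obj i := fun i => retraction (s i)
  have hsρ : ∀ i, s i ≫ ρ i = 𝟙 _ := fun i => IsSplitMono.id (s i)
  -- the components of the section of the canonical epi `∐ F.obj ⟶ colimit F`
  let σ : ∀ n : ℕ, F.obj n ⟶ ∐ F.obj := fun n =>
    Nat.rec (Sigma.ι F.obj 0)
      (fun m σm => ρ m ≫ σm + (𝟙 _ - ρ m ≫ s m) ≫ Sigma.ι F.obj (m + 1)) n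
  have hstep : ∀ m : ℕ, s m ≫ σ (m + 1) = σ m := by
    intro m
    show s m ≫ (ρ m ≫ σ m + (𝟙 _ - ρ m ≫ s m) ≫ Sigma.ι F.obj (m + 1)) = σ m
    simp only [Preadditive.comp_add, Preadditive.sub_comp, Preadditive.comp_sub,
      Category.id_comp, Category.assoc, reassoc_of% hsρ m]
    abel
  have hcomp : ∀ (i j : ℕ) (h : i ≤ j), F.map (homOfLE h) ≫ σ j = σ i := by
    intro i j h
    induction j, h using Nat.le_induction with
    | base =>
      rw [show homOfLE (le_refl i) = 𝟙 i from Subsingleton.elim _ _, F.map_id,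
        Category.id_comp]
    | succ m hm ih =>
      have h1 : homOfLE (Nat.le_succ_of_le hm) =
          homOfLE hm ≫ homOfLE (Nat.le_succ m) :=
        Subsingleton.elim _ _
      rw [show homOfLE (by omega : i ≤ m + 1) = homOfLE hm ≫ homOfLE (Nat.le_succ m)
        from Subsingleton.elim _ _, F.map_comp, Category.assoc]
      have h2 : F.map (homOfLE (Nat.le_succ m)) ≫ σ (m + 1) = σ m := hstep m
      rw [h2, ih]
  -- assemble the cocone and the section
  let c : Cocone F :=
    { pt := ∐ F.obj
      ι :=
        { app := σ
          naturality := by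
            intro i j f
            have : f = homOfLE (leOfHom f) := Subsingleton.elim _ _
            rw [this, hcomp i j (leOfHom f)]
            simp }}
  let S : colimit F ⟶ ∐ F.obj := colimit.desc F c
  have hdesc : ∀ n : ℕ, σ n ≫ Sigma.desc (colimit.ι F) = colimit.ι F n := by
    intro n
    induction n with
    | zero => simp [σ]
    | succ m ih =>
      show (ρ m ≫ σ m + (𝟙 _ - ρ m ≫ s m) ≫ Sigma.ι F.obj (m + 1)) ≫
          Sigma.desc (colimit.ι F) = colimit.ι F (m + 1)
      have hw : s m ≫ colimit.ι F (m + 1) = colimit.ι F m := colimit.w F _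
      simp only [Preadditive.add_comp, Preadditive.sub_comp, Category.id_comp,
        Category.assoc, Sigma.ι_desc, ih, hw]
      abel
  refine summandClosed (sumClosed (fun i => F.obj i) hX) S (Sigma.desc (colimit.ι F)) ?_
  apply colimit.hom_ext
  intro j
  rw [← Category.assoc, colimit.ι_desc]
  show σ j ≫ Sigma.desc (colimit.ι F) = colimit.ι F j ≫ 𝟙 _
  rw [hdesc j, Category.comp_id]

end Paper
end

section
/- Let A¹ → A² → ⋯ be a direct system of chain complexes over a cocomplete abelian category in which each transition map is a degreewise split monomorphism, and let E be a fixed complex. If Hom_A(Aⁱ, E) is an acyclic complex of abelian groups for every i (i.e., every chain map Aⁱ → Σⁿ E is null homotopic for all n), then Hom_A(colim Aⁱ, E) is acyclic; in particular every chain map colim Aⁱ → E is null homotopic. -/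
open CategoryTheory Category Limits ZeroObject

universe v u

namespace Paper

variable {A : Type u} [Category.{v} A] [Abelian A]

lemma dK_assoc (C : Cx A) {p q q' : ℤ} (hq : q = q') (h : C.X q = C.X q') {Z : A}
    (f : C.X q' ⟶ Z) : C.d p q ≫ eqToHom h ≫ f = C.d p q' ≫ f := by subst hq; simp

lemma dK (C : Cx A) {p q q' : ℤ} (hq : q = q') (h : C.X q = C.X q') :
    C.d p q ≫ eqToHom h = C.d p q' := by subst hq; simp
lemma Kd (C : Cx A) {p p' q : ℤ} (hp : p = p') (h : C.X p = C.X p') :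
    eqToHom h ≫ C.d p' q = C.d p q := by subst hp; simp
lemma d_congr (C : Cx A) {p p' q q' : ℤ} (hp : p = p') (hq : q = q') :
    C.d p q = eqToHom (by rw [hp]) ≫ C.d p' q' ≫ eqToHom (by rw [hq]) := by
  subst hp; subst hq; simp
lemma fam_congr {X Y : Cx A} (e f : ℤ → ℤ) (w : ∀ p : ℤ, X.X (e p) ⟶ Y.X (f p))
    {p p' : ℤ} (h : p = p') :
    w p = eqToHom (by rw [h]) ≫ w p' ≫ eqToHom (by rw [h]) := by
  subst h; simp
lemma succ_transport (P : ℤ → Prop) (h : ∀ m : ℤ, P (m + 1)) (m : ℤ) : P m := by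
  have := h (m - 1); rwa [show m - 1 + 1 = m by omega] at this
lemma comm_succ {X Y : Cx A} {f : X ⟶ Y} (H : Homotopy f (0 : X ⟶ Y)) (m : ℤ) :
    f.f (m+1) = X.d (m+1) m ≫ H.hom m (m+1) + H.hom (m+1) (m+1+1) ≫ Y.d (m+1+1) (m+1) := by
  have h1 : (ComplexShape.down ℤ).Rel (m+1) m := by simp
  have h2 : (ComplexShape.down ℤ).Rel (m+1+1) (m+1) := by simp
  have := H.comm (m+1)
  rw [dNext_eq _ h1, prevD_eq _ h2] at this
  simpa using this
def mkHt {X Y : Cx A} (f : X ⟶ Y) (σ : ∀ m : ℤ, X.X m ⟶ Y.X (m+1))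
    (hσ : ∀ m : ℤ, f.f (m+1) = X.d (m+1) m ≫ σ m + σ (m+1) ≫ Y.d (m+1+1) (m+1)) :
    Homotopy f 0 where
  hom i j := if h : j = i + 1 then σ i ≫ eqToHom (by rw [h]) else 0
  zero i j hn := dif_neg (fun h => hn (by simp [ComplexShape.down_Rel, h]))
  comm i := by
    obtain ⟨m, rfl⟩ : ∃ m, i = m + 1 := ⟨i - 1, by omega⟩
    have h1 : (ComplexShape.down ℤ).Rel (m+1) m := by simp
    have h2 : (ComplexShape.down ℤ).Rel (m+1+1) (m+1) := by simp
    rw [dNext_eq _ h1, prevD_eq _ h2]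
    simp only [dif_pos rfl, eqToHom_refl, comp_id]
    simpa using hσ m
lemma mkHt_hom {X Y : Cx A} (f : X ⟶ Y) (σ : ∀ m : ℤ, X.X m ⟶ Y.X (m+1))
    (hσ : ∀ m : ℤ, f.f (m+1) = X.d (m+1) m ≫ σ m + σ (m+1) ≫ Y.d (m+1+1) (m+1)) (m : ℤ) :
    (mkHt f σ hσ).hom m (m+1) = σ m := by
  simp [mkHt]


lemma step (E : Cx A) (n : ℤ) {A₁ A₂ : Cx A} (μ : A₁ ⟶ A₂)
    (hsp : ∀ m : ℤ, IsSplitMono (μ.f m))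
    (hnull : ∀ φ : A₁ ⟶ shiftC E (n-1), NullHomotopic φ)
    {g₁ : A₁ ⟶ shiftC E n} {g₂ : A₂ ⟶ shiftC E n} (hg : μ ≫ g₂ = g₁)
    (s : Homotopy g₁ 0) (s'' : Homotopy g₂ 0) :
    ∃ s' : Homotopy g₂ 0, ∀ m : ℤ, μ.f m ≫ s'.hom m (m+1) = s.hom m (m+1) := by
  classical
  -- the defect
  set δ : ∀ m : ℤ, A₁.X m ⟶ (shiftC E n).X (m+1) :=
    fun m => s.hom m (m+1) - μ.f m ≫ s''.hom m (m+1) with hδdef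
  have hδ : ∀ m : ℤ,
      A₁.d (m+1) m ≫ δ m + δ (m+1) ≫ (shiftC E n).d (m+1+1) (m+1) = 0 := by
    intro m
    have h1 := comm_succ s m
    have h2 := comm_succ s'' m
    have h3 : μ.f (m+1) ≫ g₂.f (m+1) = g₁.f (m+1) := by
      rw [← hg]; simp
    have h4 := μ.comm (m+1) m
    have h4' := reassoc_of% h4
    calc A₁.d (m+1) m ≫ δ m + δ (m+1) ≫ (shiftC E n).d (m+1+1) (m+1)
        = (A₁.d (m+1) m ≫ s.hom m (m+1) + s.hom (m+1) (m+1+1) ≫ (shiftC E n).d (m+1+1) (m+1))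
          - μ.f (m+1) ≫ (A₂.d (m+1) m ≫ s''.hom m (m+1)
            + s''.hom (m+1) (m+1+1) ≫ (shiftC E n).d (m+1+1) (m+1)) := by
          simp only [hδdef, Preadditive.sub_comp, Preadditive.comp_sub, Preadditive.comp_add,
            assoc, h4']
          abel
      _ = g₁.f (m+1) - μ.f (m+1) ≫ g₂.f (m+1) := by rw [← h1, ← h2]
      _ = 0 := by rw [h3, sub_self]
  -- identification of shifts
  set β : ∀ m : ℤ, (shiftC E n).X (m+1) ≅ (shiftC E (n-1)).X m :=
    fun m => E.XIsoOfEq (show m+1-n = m-(n-1) by omega) with hβdef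
  have hsign : ((n-1).negOnePow : ℤ) = -((n.negOnePow : ℤ)) := by
    rw [Int.negOnePow_sub, Int.negOnePow_one, mul_neg_one]
    simp
  have hβd : ∀ m : ℤ, (β (m+1)).hom ≫ (shiftC E (n-1)).d (m+1) m
      = -((shiftC E n).d (m+1+1) (m+1) ≫ (β m).hom) := by
    intro m
    simp only [hβdef, shiftC_d, HomologicalComplex.XIsoOfEq, eqToIso.hom, hsign, neg_smul]
    erw [Preadditive.comp_neg, Preadditive.comp_zsmul, Preadditive.zsmul_comp,
      Kd E (show m+1+1-n = m+1-(n-1) by omega),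
      dK E (show m+1-n = m-(n-1) by omega)]
  -- the defect as a chain map to the (n-1)-shift
  set φ : A₁ ⟶ shiftC E (n-1) :=
    { f := fun m => δ m ≫ (β m).hom
      comm' := by
        intro i j hij
        have hij' : j + 1 = i := hij
        subst hij'
        have h5 : δ (j+1) ≫ (shiftC E n).d (j+1+1) (j+1) = -(A₁.d (j+1) j ≫ δ j) :=
          eq_neg_of_add_eq_zero_right (hδ j)
        rw [assoc, hβd j, Preadditive.comp_neg, ← assoc, ← assoc, h5, Preadditive.neg_comp,
          neg_neg, assoc] } with hφdef
  obtain ⟨H⟩ := hnull φ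
  have hu : ∀ m : ℤ, δ (m+1) ≫ (β (m+1)).hom
      = A₁.d (m+1) m ≫ H.hom m (m+1)
        + H.hom (m+1) (m+1+1) ≫ (shiftC E (n-1)).d (m+1+1) (m+1) := by
    intro m
    exact comm_succ H m
  -- retractions
  set r : ∀ m : ℤ, A₂.X m ⟶ A₁.X m := fun m => @retraction _ _ _ _ (μ.f m) (hsp m) with hrdef
  have hr : ∀ m : ℤ, μ.f m ≫ r m = 𝟙 _ := fun m => @IsSplitMono.id _ _ _ _ (μ.f m) (hsp m)
  set w : ∀ m : ℤ, A₂.X m ⟶ (shiftC E n).X (m+1+1) :=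
    fun m => r m ≫ H.hom m (m+1) ≫ (β (m+1)).inv with hwdef
  have hμw : ∀ m : ℤ, μ.f m ≫ w m = H.hom m (m+1) ≫ (β (m+1)).inv := by
    intro m
    rw [hwdef]
    dsimp only
    rw [← assoc, hr m, id_comp]
  set t : ∀ m : ℤ, A₂.X m ⟶ (shiftC E n).X (m+1) :=
    fun m => A₂.d m (m-1) ≫ w (m-1) ≫
        eqToHom (show (shiftC E n).X (m-1+1+1) = (shiftC E n).X (m+1) by
          rw [show m-1+1+1 = m+1 by omega])
      - w m ≫ (shiftC E n).d (m+1+1) (m+1) with htdef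
  have ht : ∀ m : ℤ, t (m+1) = A₂.d (m+1) m ≫ w m
      - w (m+1) ≫ (shiftC E n).d (m+1+1+1) (m+1+1) := by
    intro m
    rw [htdef]
    dsimp only
    congr 1
    rw [fam_congr (fun p => p) (fun p => p+1+1) w (show m+1-1 = m by omega)]
    simp only [assoc, eqToHom_trans]
    rw [dK_assoc A₂ (show m+1-1 = m by omega)]
    simp [eqToHom_trans]
  -- corrected homotopy for g₂
  have hσ' : ∀ m : ℤ, g₂.f (m+1)
      = A₂.d (m+1) m ≫ (s''.hom m (m+1) + t m)
        + (s''.hom (m+1) (m+1+1) + t (m+1)) ≫ (shiftC E n).d (m+1+1) (m+1) := by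
    intro m
    have h2 := comm_succ s'' m
    have hz : A₂.d (m+1) m ≫ t m + t (m+1) ≫ (shiftC E n).d (m+1+1) (m+1) = 0 := by
      rw [ht m, htdef]
      dsimp only
      simp only [Preadditive.comp_sub, Preadditive.sub_comp, assoc,
        HomologicalComplex.d_comp_d, HomologicalComplex.d_comp_d_assoc, zero_comp, comp_zero]
      abel
    rw [Preadditive.comp_add, Preadditive.add_comp, add_add_add_comm, hz, add_zero]
    exact h2
  -- the restriction identity
  have hres : ∀ m : ℤ, μ.f m ≫ t m = δ m := by
    apply succ_transport (fun m => μ.f m ≫ t m = δ m)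
    intro m
    have e3 : δ (m+1) = A₁.d (m+1) m ≫ H.hom m (m+1) ≫ (β (m+1)).inv
        + H.hom (m+1) (m+1+1) ≫ (shiftC E (n-1)).d (m+1+1) (m+1) ≫ (β (m+1)).inv := by
      have h7 := (Iso.eq_comp_inv (β (m+1))).2 (hu m)
      rw [h7, Preadditive.add_comp, assoc, assoc]
    have e4 : (shiftC E (n-1)).d (m+1+1) (m+1) ≫ (β (m+1)).inv
        = -((β (m+1+1)).inv ≫ (shiftC E n).d (m+1+1+1) (m+1+1)) := by
      have h6 := hβd (m+1)
      calc (shiftC E (n-1)).d (m+1+1) (m+1) ≫ (β (m+1)).inv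
          = (β (m+1+1)).inv ≫ ((β (m+1+1)).hom ≫ (shiftC E (n-1)).d (m+1+1) (m+1))
              ≫ (β (m+1)).inv := by
            rw [← assoc, ← assoc, Iso.inv_hom_id, id_comp]
        _ = -((β (m+1+1)).inv ≫ (shiftC E n).d (m+1+1+1) (m+1+1)) := by
            rw [h6]
            simp only [Preadditive.neg_comp, Preadditive.comp_neg, assoc, Iso.hom_inv_id,
              comp_id]
    rw [ht m, Preadditive.comp_sub]
    have hcomm := reassoc_of% (μ.comm (m+1) m)
    have h8 := reassoc_of% (hμw (m+1))
    rw [hcomm, hμw m, h8, e3, e4]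
    simp only [Preadditive.comp_neg, assoc, sub_eq_add_neg]
  refine ⟨mkHt g₂ (fun m => s''.hom m (m+1) + t m) hσ', ?_⟩
  intro m
  rw [mkHt_hom, Preadditive.comp_add, hres m, hδdef]
  dsimp only
  abel

lemma part1 {A : Type u} [Category.{v} A] [Abelian A] [HasColimits A]
    (F : ℕ ⥤ Cx A) (E : Cx A)
    (hsplit : ∀ (i : ℕ) (n : ℤ), IsSplitMono ((F.map (homOfLE (Nat.le_succ i))).f n))
    (h : ∀ (i : ℕ) (n : ℤ) (g : F.obj i ⟶ shiftC E n), NullHomotopic g)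
    (n : ℤ) (g : colimit F ⟶ shiftC E n) : NullHomotopic g := by
  classical
  have hex : ∀ (i : ℕ) (si : Homotopy (colimit.ι F i ≫ g) 0),
      ∃ s' : Homotopy (colimit.ι F (i+1) ≫ g) 0,
        ∀ m : ℤ, (F.map (homOfLE (Nat.le_succ i))).f m ≫ s'.hom m (m+1) = si.hom m (m+1) := by
    intro i si
    refine step E n (F.map (homOfLE (Nat.le_succ i))) (hsplit i) (h i (n-1)) ?_ si
      ((h (i+1) n (colimit.ι F (i+1) ≫ g)).some)
    rw [← assoc, colimit.w]
  obtain ⟨S, hS⟩ : ∃ S : ∀ i : ℕ, Homotopy (colimit.ι F i ≫ g) 0,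
      ∀ (i : ℕ) (m : ℤ), (F.map (homOfLE (Nat.le_succ i))).f m ≫ (S (i+1)).hom m (m+1)
        = (S i).hom m (m+1) := by
    refine ⟨fun i => Nat.rec ((h 0 n (colimit.ι F 0 ≫ g)).some)
      (fun i si => (hex i si).choose) i, fun i m => ?_⟩
    exact (hex i _).choose_spec m
  have iC : ∀ m : ℤ, IsColimit ((HomologicalComplex.eval A (ComplexShape.down ℤ) m).mapCocone
      (colimit.cocone F)) := fun m => isColimitOfPreserves _ (colimit.isColimit F)
  let cc : ∀ m : ℤ, Cocone (F ⋙ HomologicalComplex.eval A (ComplexShape.down ℤ) m) := fun m =>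
    { pt := (shiftC E n).X (m+1)
      ι := NatTrans.ofSequence (fun i => (S i).hom m (m+1)) (by
        intro i
        have := hS i m
        simp only [Functor.const_obj_obj, Functor.const_obj_map, comp_id]
        exact this.trans (comp_id _).symm) }
  let σ : ∀ m : ℤ, (colimit F).X m ⟶ (shiftC E n).X (m+1) := fun m => (iC m).desc (cc m)
  have fac : ∀ (i : ℕ) (m : ℤ), (colimit.ι F i).f m ≫ σ m = (S i).hom m (m+1) := by
    intro i m
    exact (iC m).fac (cc m) i
  refine ⟨mkHt g σ ?_⟩
  intro m
  apply (iC (m+1)).hom_ext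
  intro j
  have hfac1 := fac j m
  have hfac2 := fac j (m+1)
  have hcommι := reassoc_of% (HomologicalComplex.Hom.comm (colimit.ι F j) (m+1) m)
  have hcs := comm_succ (S j) m
  show (colimit.ι F j).f (m+1) ≫ g.f (m+1)
      = (colimit.ι F j).f (m+1) ≫ ((colimit F).d (m+1) m ≫ σ m
        + σ (m+1) ≫ (shiftC E n).d (m+1+1) (m+1))
  rw [Preadditive.comp_add, hcommι, hfac1, ← assoc, hfac2]
  have : (colimit.ι F j).f (m+1) ≫ g.f (m+1) = (colimit.ι F j ≫ g).f (m+1) := rfl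
  rw [this, hcs]

def s0iso (E : Cx A) : shiftC E 0 ≅ E := by
  refine HomologicalComplex.Hom.isoOfComponents (fun m => E.XIsoOfEq (show m - 0 = m by omega)) ?_
  intro i j hij
  simp only [shiftC_d, Int.negOnePow_zero, HomologicalComplex.XIsoOfEq, eqToIso.hom,
    Units.val_one, one_smul]
  erw [Kd E (show i - 0 = i by omega), dK E (show j - 0 = j by omega)]

/-- If every chain map `Aⁱ ⟶ Σⁿ E` is null homotopic for a direct system
with degreewise split monic transitions, then the same holds for the colimit; in particular
every chain map `colim Aⁱ ⟶ E` is null homotopic. -/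
theorem stmt_7 {A : Type u} [Category.{v} A] [Abelian A] [HasColimits A]
    (F : ℕ ⥤ Cx A) (E : Cx A)
    (hsplit : ∀ (i : ℕ) (n : ℤ), IsSplitMono ((F.map (homOfLE (Nat.le_succ i))).f n))
    (h : ∀ (i : ℕ) (n : ℤ) (g : F.obj i ⟶ shiftC E n), NullHomotopic g) :
    (∀ (n : ℤ) (g : colimit F ⟶ shiftC E n), NullHomotopic g) ∧
    (∀ g : colimit F ⟶ E, NullHomotopic g) := by
  constructor
  · exact fun n g => part1 F E hsplit h n g
  · intro g
    obtain ⟨H⟩ := part1 F E hsplit h 0 (g ≫ (s0iso E).inv)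
    exact ⟨(Homotopy.ofEq (by simp)).trans ((H.compRight (s0iso E).hom).trans
      (Homotopy.ofEq (by simp)))⟩


end Paper
end

section
/- Let (A, E) be an exact category and consider a commutative square with horizontal admissible monomorphisms i : A ↣ B and i' : A' ↣ B', vertical maps f : A → A' and f' : B → B'. The square is a pushout if and only if the sequence A → B ⊕ A' → B', with first map (i, −f)ᵗ and second map (f', i'), is a short exact sequence in E (i.e., a kernel-cokernel pair belonging to E). -/
open CategoryTheory Category Limits ZeroObject

universe v u

namespace Paper

variable {A : Type u} [Category.{v} A] [Abelian A]

/-- A Quillen exact structure on an additive category. -/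
structure ExactStructure (B : Type u) [Category.{v} B] [Preadditive B] where
  /-- The distinguished class of kernel-cokernel pairs. -/
  E : ∀ ⦃X Y Z : B⦄, (X ⟶ Y) → (Y ⟶ Z) → Prop
  comp_zero : ∀ ⦃X Y Z : B⦄ (f : X ⟶ Y) (g : Y ⟶ Z), E f g → f ≫ g = 0
  isKernel : ∀ ⦃X Y Z : B⦄ (f : X ⟶ Y) (g : Y ⟶ Z) (h : E f g),
    Nonempty (IsLimit (KernelFork.ofι f (comp_zero f g h)))
  isCokernel : ∀ ⦃X Y Z : B⦄ (f : X ⟶ Y) (g : Y ⟶ Z) (h : E f g),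
    Nonempty (IsColimit (CokernelCofork.ofπ g (comp_zero f g h)))
  isoClosed : ∀ ⦃X Y Z X' Y' Z' : B⦄ (f : X ⟶ Y) (g : Y ⟶ Z) (f' : X' ⟶ Y') (g' : Y' ⟶ Z')
    (α : X ≅ X') (β : Y ≅ Y') (γ : Z ≅ Z'),
    f ≫ β.hom = α.hom ≫ f' → g ≫ γ.hom = β.hom ≫ g' → E f g → E f' g'
  id_admissibleMono : ∀ X : B, ∃ (Z : B) (g : X ⟶ Z), E (𝟙 X) g
  id_admissibleEpi : ∀ X : B, ∃ (Z : B) (f : Z ⟶ X), E f (𝟙 X)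
  mono_comp : ∀ ⦃X Y Z : B⦄ (f : X ⟶ Y) (g : Y ⟶ Z),
    (∃ (W : B) (p : Y ⟶ W), E f p) → (∃ (W : B) (p : Z ⟶ W), E g p) →
    ∃ (W : B) (p : Z ⟶ W), E (f ≫ g) p
  epi_comp : ∀ ⦃X Y Z : B⦄ (f : X ⟶ Y) (g : Y ⟶ Z),
    (∃ (W : B) (j : W ⟶ X), E j f) → (∃ (W : B) (j : W ⟶ Y), E j g) →
    ∃ (W : B) (j : W ⟶ X), E j (f ≫ g)
  pushout : ∀ ⦃X Y : B⦄ (f : X ⟶ Y), (∃ (W : B) (p : Y ⟶ W), E f p) →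
    ∀ ⦃X' : B⦄ (a : X ⟶ X'), ∃ (Y' : B) (f' : X' ⟶ Y') (b : Y ⟶ Y'),
      IsPushout f a b f' ∧ ∃ (W : B) (p : Y' ⟶ W), E f' p
  pullback : ∀ ⦃X Y : B⦄ (g : X ⟶ Y), (∃ (W : B) (j : W ⟶ X), E j g) →
    ∀ ⦃Y' : B⦄ (a : Y' ⟶ Y), ∃ (X' : B) (g' : X' ⟶ Y') (b : X' ⟶ X),
      IsPullback b g' g a ∧ ∃ (W : B) (j : W ⟶ X'), E j g'

section Aux

variable {B : Type u} [Category.{v} B] [Preadditive B] [HasBinaryBiproducts B]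

/-- The biproduct is the pullback of any cospan of zero maps. -/
lemma aux_isPullback_fst_snd (X Y Z : B) :
    IsPullback (biprod.fst : X ⊞ Y ⟶ X) biprod.snd (0 : X ⟶ Z) (0 : Y ⟶ Z) :=
  IsPullback.of_isLimit (PullbackCone.IsLimit.mk (by simp)
    (fun s => biprod.lift s.fst s.snd) (by simp) (by simp)
    (fun s m h1 h2 => by apply biprod.hom_ext <;> simpa))

/-- `i ⊕ 𝟙` is the pushout of `i` along `biprod.inl`. -/
lemma aux_isPushout_map_id {X Y : B} (i : X ⟶ Y) (C : B) :
    IsPushout i (biprod.inl : X ⟶ X ⊞ C) biprod.inl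
      (biprod.desc (i ≫ biprod.inl) biprod.inr) :=
  IsPushout.of_isColimit (PushoutCocone.IsColimit.mk (inl := (biprod.inl : Y ⟶ Y ⊞ C))
    (inr := biprod.desc (i ≫ biprod.inl) biprod.inr) (by simp)
    (fun s => biprod.desc s.inl (biprod.inr ≫ s.inr))
    (fun s => by simp)
    (fun s => by
      apply biprod.hom_ext'
      · simpa using s.condition
      · simp)
    (fun s m h1 h2 => by
      apply biprod.hom_ext'
      · simpa using h1
      · simpa using biprod.inr ≫= h2))

/-- Transport an `E`-sequence along another cokernel of the same admissible mono. -/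
lemma aux_E_of_isColimit (ES : ExactStructure B) {X Y W W' : B}
    (a : X ⟶ Y) (p : Y ⟶ W) (hE : ES.E a p) (q : Y ⟶ W') (wq : a ≫ q = 0)
    (hc : IsColimit (CokernelCofork.ofπ q wq)) : ES.E a q := by
  have hck := (ES.isCokernel a p hE).some
  let γ := hck.coconePointUniqueUpToIso hc
  have hγ : p ≫ γ.hom = q := by
    simpa using hck.comp_coconePointUniqueUpToIso_hom hc WalkingParallelPair.one
  exact ES.isoClosed a p a q (Iso.refl _) (Iso.refl _) γ (by simp) (by simpa using hγ) hE

end Aux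

/-- In an exact category, a commutative square on two admissible
monomorphisms `i`, `i'` is a pushout iff `A ↣ B ⊕ A' ↠ B'` is an admissible short exact
sequence. -/
theorem stmt_8 {B : Type u} [Category.{v} B] [Preadditive B] [HasBinaryBiproducts B]
    (ES : ExactStructure B) {A₀ B₀ A' B' : B}
    (i : A₀ ⟶ B₀) (i' : A' ⟶ B') (f : A₀ ⟶ A') (f' : B₀ ⟶ B')
    (comm : i ≫ f' = f ≫ i')
    (hi : ∃ (Z : B) (g : B₀ ⟶ Z), ES.E i g)
    (hi' : ∃ (Z : B) (g : B' ⟶ Z), ES.E i' g) :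
    IsPushout i f f' i' ↔ ES.E (biprod.lift i (-f)) (biprod.desc f' i') := by
  have w0 : biprod.lift i (-f) ≫ biprod.desc f' i' = 0 := by
    simp [biprod.lift_desc, comm]
  constructor
  · intro hpo
    -- Step 1: the split mono `biprod.inl : A₀ ⟶ A₀ ⊞ A'` is admissible.
    obtain ⟨Z0, g0, hg0⟩ := ES.id_admissibleMono A₀
    have hg0' : g0 = 0 := by simpa using ES.comp_zero _ _ hg0
    rw [hg0'] at hg0
    obtain ⟨X', g', b, hpb, W1, j, hj⟩ :=
      ES.pullback (0 : A₀ ⟶ Z0) ⟨A₀, 𝟙 _, hg0⟩ (0 : A' ⟶ Z0)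
    have hpb' := aux_isPullback_fst_snd A₀ A' Z0
    let β := hpb.isoIsPullback _ _ hpb'
    have hβs : β.hom ≫ biprod.snd = g' := hpb.isoIsPullback_hom_snd _ _ hpb'
    have hjsnd : ES.E (j ≫ β.hom) (biprod.snd : A₀ ⊞ A' ⟶ A') :=
      ES.isoClosed j g' _ _ (Iso.refl _) β (Iso.refl _) (by simp)
        (by simpa using hβs.symm) hj
    have hk1 : IsLimit (KernelFork.ofι (j ≫ β.hom) (ES.comp_zero _ _ hjsnd)) :=
      (ES.isKernel _ _ hjsnd).some
    have hk2 := biprod.isKernelSndKernelFork A₀ A'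
    let α := hk1.conePointUniqueUpToIso hk2
    have hα : α.hom ≫ (biprod.inl : A₀ ⟶ A₀ ⊞ A') = j ≫ β.hom := by
      simpa using hk1.conePointUniqueUpToIso_hom_comp hk2 WalkingParallelPair.zero
    have hinl : ES.E (biprod.inl : A₀ ⟶ A₀ ⊞ A') biprod.snd :=
      ES.isoClosed (j ≫ β.hom) biprod.snd biprod.inl biprod.snd α (Iso.refl _)
        (Iso.refl _) (by simp only [Iso.refl_hom, comp_id]; exact hα.symm) (by simp) hjsnd
    -- Step 2: shear to get `biprod.lift (𝟙 A₀) (-f)` admissible.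
    let σ : (A₀ ⊞ A') ≅ (A₀ ⊞ A') :=
      { hom := biprod.lift biprod.fst (biprod.snd - biprod.fst ≫ f)
        inv := biprod.lift biprod.fst (biprod.snd + biprod.fst ≫ f)
        hom_inv_id := by apply biprod.hom_ext <;> simp
        inv_hom_id := by apply biprod.hom_ext <;> simp }
    have hσ : biprod.inl ≫ σ.hom = biprod.lift (𝟙 A₀) (-f) := by
      apply biprod.hom_ext <;> simp [σ]
    have hlift1 : ES.E (biprod.lift (𝟙 A₀) (-f)) (σ.inv ≫ biprod.snd) :=
      ES.isoClosed biprod.inl biprod.snd _ _ (Iso.refl _) σ (Iso.refl _)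
        (by simpa using hσ) (by simp) hinl
    -- Step 3: `biprod.map i (𝟙 A')` is admissible as a pushout of `i`.
    obtain ⟨Y', f'', b2, hpo2, W2, p2, hp2⟩ := ES.pushout i hi (biprod.inl : A₀ ⟶ A₀ ⊞ A')
    have hpo2' := aux_isPushout_map_id i A'
    let δ := hpo2.isoIsPushout _ _ hpo2'
    have hδ : f'' ≫ δ.hom = biprod.desc (i ≫ biprod.inl) biprod.inr := hpo2.inr_isoIsPushout_hom _ _ hpo2'
    have hmap : ES.E (biprod.desc (i ≫ biprod.inl) (biprod.inr : A' ⟶ B₀ ⊞ A')) (δ.inv ≫ p2) :=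
      ES.isoClosed f'' p2 _ _ (Iso.refl _) δ (Iso.refl _) (by simpa using hδ)
        (by simp) hp2
    -- Step 4: compose to get `biprod.lift i (-f)` admissible.
    obtain ⟨W3, p3, hp3⟩ := ES.mono_comp (biprod.lift (𝟙 A₀) (-f)) (biprod.desc (i ≫ biprod.inl) biprod.inr)
      ⟨_, _, hlift1⟩ ⟨_, _, hmap⟩
    have hcomp : biprod.lift (𝟙 A₀) (-f) ≫ biprod.desc (i ≫ biprod.inl) biprod.inr = biprod.lift i (-f) := by
      apply biprod.hom_ext <;> simp
    rw [hcomp] at hp3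
    -- Step 5: the pushout realizes `biprod.desc f' i'` as a cokernel of `biprod.lift i (-f)`.
    exact aux_E_of_isColimit ES _ p3 hp3 _ w0 hpo.isColimitCokernelCofork
  · intro hE
    have sq : CommSq i f f' i' := ⟨comm⟩
    have hc : IsColimit (CokernelCofork.ofπ (biprod.desc f' i') (ES.comp_zero _ _ hE)) :=
      (ES.isCokernel _ _ hE).some
    exact IsPushout.of_isColimit' sq (sq.isColimitEquivIsColimitCokernelCofork.symm hc)

end Paper
end

section
/- Let (X, Y) be an admissible balanced pair in an abelian category A, and let E-dwX̃ denote the class of complexes all of whose terms lie in X. Then every bounded below complex X in E-dwX̃ has the property that every chain map from X to any right X-acyclic complex is null homotopic (i.e., bounded below degreewise-X complexes lie in E-dgX̃). -/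
open CategoryTheory Category Limits ZeroObject

universe v u

namespace Paper

variable {A : Type u} [Category.{v} A] [Abelian A]

section Aux

variable {A : Type u} [Category.{v} A] [Abelian A]
variable (𝒳 : Set A) (G E : Cx A)

lemma cast_comp_d {E : Cx A} {i i' j : ℤ} (h : i = i') :
    eqToHom (show E.X i = E.X i' by rw [h]) ≫ E.d i' j = E.d i j := by
  subst h; simp

open Classical in
/-- Choose a lift through the differential, if it exists. -/
noncomputable def pick (hG : ∀ n : ℤ, G.X n ∈ 𝒳) (hE : RightAcyclic 𝒳 E)
    (n : ℤ) (g : G.X n ⟶ E.X n) : G.X n ⟶ E.X (n + 1) :=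
  if h : g ≫ E.d n (n - 1) = 0 then (hE n (hG n) g h).choose else 0

lemma pick_spec (hG : ∀ n : ℤ, G.X n ∈ 𝒳) (hE : RightAcyclic 𝒳 E)
    (n : ℤ) (g : G.X n ⟶ E.X n) (h : g ≫ E.d n (n - 1) = 0) :
    pick 𝒳 G E hG hE n g ≫ E.d (n + 1) n = g := by
  unfold pick
  rw [dif_pos h]; exact (hE n (hG n) g h).choose_spec

/-- Approximations to the homotopy, built one degree at a time. -/
noncomputable def T (hG : ∀ n : ℤ, G.X n ∈ 𝒳) (hE : RightAcyclic 𝒳 E)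
    (f : G ⟶ E) (b : ℤ) : ℕ → ∀ n : ℤ, (G.X n ⟶ E.X (n + 1))
  | 0 => fun _ => 0
  | (k + 1) => fun n =>
      if n = b + k then
        pick 𝒳 G E hG hE n (f.f n - G.d n (n - 1) ≫ T hG hE f b k (n - 1) ≫
          eqToHom (show E.X (n - 1 + 1) = E.X n by rw [sub_add_cancel]))
      else T hG hE f b k n

lemma T_stab (hG : ∀ n : ℤ, G.X n ∈ 𝒳) (hE : RightAcyclic 𝒳 E)
    (f : G ⟶ E) (b : ℤ) (k m : ℕ) (n : ℤ) (hn : n < b + k) :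
    T 𝒳 G E hG hE f b (k + m) n = T 𝒳 G E hG hE f b k n := by
  induction m with
  | zero => rfl
  | succ m ih =>
      show T 𝒳 G E hG hE f b (k + m + 1) n = _
      have hcond : ¬ (n = b + ((k + m : ℕ) : ℤ)) := by push_cast; omega
      simp only [T]
      rw [if_neg hcond]
      exact ih

lemma T_spec (hG : ∀ n : ℤ, G.X n ∈ 𝒳) (hE : RightAcyclic 𝒳 E)
    (f : G ⟶ E) (b : ℤ) (hb : ∀ n : ℤ, n < b → IsZero (G.X n)) :
    ∀ (k : ℕ) (n : ℤ), n ≤ b - 1 + k →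
      T 𝒳 G E hG hE f b k n ≫ E.d (n + 1) n
        = f.f n - G.d n (n - 1) ≫ T 𝒳 G E hG hE f b k (n - 1) ≫
            eqToHom (show E.X (n - 1 + 1) = E.X n by rw [sub_add_cancel]) := by
  intro k
  induction k with
  | zero =>
      intro n hn
      have hz : IsZero (G.X n) := hb n (by omega)
      simp [T, hz.eq_of_src (f.f n) 0]
  | succ k ih =>
      intro n hn
      push_cast at hn
      rcases eq_or_lt_of_le hn with heq | hlt
      · -- n = b + k : use `pick`
        have h2 : T 𝒳 G E hG hE f b (k + 1) (n - 1) = T 𝒳 G E hG hE f b k (n - 1) := by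
          simp only [T]; rw [if_neg (show ¬ (n - 1 = b + (k : ℤ)) by omega)]
        have h1 : T 𝒳 G E hG hE f b (k + 1) n
            = pick 𝒳 G E hG hE n (f.f n - G.d n (n - 1) ≫ T 𝒳 G E hG hE f b k (n - 1) ≫
                eqToHom (show E.X (n - 1 + 1) = E.X n by rw [sub_add_cancel])) := by
          simp only [T]; rw [if_pos (show n = b + (k : ℤ) by omega)]
        rw [h1, h2]
        apply pick_spec
        have hprev := ih (n - 1) (by omega)
        rw [Preadditive.sub_comp, assoc, assoc, cast_comp_d (by omega : n - 1 + 1 = n),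
          hprev, f.comm n (n - 1)]
        simp
      · -- n < b + k : nothing changes
        have h1 : T 𝒳 G E hG hE f b (k + 1) n = T 𝒳 G E hG hE f b k n := by
          simp only [T]; rw [if_neg (show ¬ (n = b + (k : ℤ)) by omega)]
        have h2 : T 𝒳 G E hG hE f b (k + 1) (n - 1) = T 𝒳 G E hG hE f b k (n - 1) := by
          simp only [T]; rw [if_neg (show ¬ (n - 1 = b + (k : ℤ)) by omega)]
        rw [h1, h2]
        exact ih n (by omega)

lemma aux_homotopy (hG : ∀ n : ℤ, G.X n ∈ 𝒳) (hE : RightAcyclic 𝒳 E)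
    (f : G ⟶ E) (b : ℤ) (hb : ∀ n : ℤ, n < b → IsZero (G.X n)) :
    Nonempty (Homotopy f 0) := by
  -- the stabilized homotopy
  set s : ∀ n : ℤ, G.X n ⟶ E.X (n + 1) :=
    fun n => T 𝒳 G E hG hE f b (n - b + 1).toNat n with hs
  have hstab : ∀ (k : ℕ) (n : ℤ), n - b + 1 ≤ k → T 𝒳 G E hG hE f b k n = s n := by
    intro k n hk
    have h1 : n - b + 1 ≤ ((n - b + 1).toNat : ℤ) := Int.self_le_toNat _
    have hsn : s n = T 𝒳 G E hG hE f b (n - b + 1).toNat n := rfl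
    rw [hsn]
    rcases le_total k (n - b + 1).toNat with h | h
    · obtain ⟨m, hm⟩ := Nat.exists_eq_add_of_le h
      rw [hm]
      exact (T_stab 𝒳 G E hG hE f b k m n (by omega)).symm
    · obtain ⟨m, hm⟩ := Nat.exists_eq_add_of_le h
      subst hm
      exact T_stab 𝒳 G E hG hE f b _ m n (by omega)
  have hkey : ∀ n : ℤ, s n ≫ E.d (n + 1) n
      = f.f n - G.d n (n - 1) ≫ s (n - 1) ≫
          eqToHom (show E.X (n - 1 + 1) = E.X n by rw [sub_add_cancel]) := by
    intro n
    set K : ℕ := (n - b + 2).toNat with hK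
    have h1 : n - b + 2 ≤ (K : ℤ) := Int.self_le_toNat _
    have := T_spec 𝒳 G E hG hE f b hb K n (by omega)
    rw [hstab K n (by omega), hstab K (n - 1) (by omega)] at this
    exact this
  refine ⟨{
    hom := fun i j => if h : j = i + 1 then s i ≫ eqToHom (by rw [h]) else 0
    zero := fun i j hij =>
      dif_neg (fun h => hij (by rw [ComplexShape.down_Rel]; omega))
    comm := fun n => ?_ }⟩
  rw [dNext_eq _ (show (ComplexShape.down ℤ).Rel n (n - 1) by
        rw [ComplexShape.down_Rel]; omega),
      prevD_eq _ (show (ComplexShape.down ℤ).Rel (n + 1) n by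
        rw [ComplexShape.down_Rel])]
  rw [dif_pos (show n = n - 1 + 1 by omega), dif_pos rfl, eqToHom_refl, comp_id, hkey n]
  simp

end Aux

/-- For an admissible balanced pair, every bounded below complex with all
terms in `𝒳` lies in `E-dg X̃`. -/
theorem stmt_9 {A : Type u} [Category.{v} A] [Abelian A]
    (𝒳 𝒴 : Set A) (hbp : BalancedPair 𝒳 𝒴) (hadm : Admissible 𝒳 𝒴)
    (G : Cx A) (hG : ∀ n : ℤ, G.X n ∈ 𝒳) (b : ℤ) (hb : ∀ n : ℤ, n < b → IsZero (G.X n)) :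
    G ∈ EdgX 𝒳 := by
  exact ⟨hG, fun E hE f => aux_homotopy 𝒳 G E hG hE f b hb⟩

end Paper
end

section
/- Let (X, Y) be an admissible balanced pair in a complete and cocomplete abelian category A. For every right X-acyclic complex E there exists a short exact sequence 0 → K → X → E → 0 in Ch(A, E) where X is a contractible complex of the form ⊕ₙ Dⁿ⁺¹(X'ₙ) with each X'ₙ ∈ X (i.e., X ∈ X̃_E), and K is right X-acyclic. -/
open CategoryTheory Category Limits ZeroObject

universe v u

namespace Paper

variable {A : Type u} [Category.{v} A] [Abelian A]

section Auxiliary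

variable {A : Type u} [Category.{v} A] [Abelian A]

lemma eqToHom_d (E : Cx A) {m n : ℤ} (h : m = n) (k : ℤ) :
    eqToHom (congrArg E.X h) ≫ E.d n k = E.d m k := by subst h; simp

/-- The explicit model for `⊕ₙ Dⁿ⁺¹(Fₙ)`: degree `n` part is `F (n-1) ⊞ F n`. -/
@[reducible] noncomputable def GG (F : ℤ → A) : Cx A where
  X n := F (n - 1) ⊞ F n
  d i j := if h : j + 1 = i then
      biprod.fst ≫ eqToHom (congrArg F (show i - 1 = j by omega)) ≫ biprod.inr else 0
  shape i j hij := dif_neg hij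
  d_comp_d' i j k hij hjk := by
    try dsimp only
    split_ifs <;> simp

lemma comp_d_zero (E : Cx A) {W : A} {m : ℤ} (x : W ⟶ E.X m) {j j' : ℤ} (h : j = j')
    (hx : x ≫ E.d m j = 0) : x ≫ E.d m j' = 0 := by subst h; exact hx

lemma t_d_eq (E : Cx A) (F : ℤ → A) (b : ∀ k, F k ⟶ E.X k)
    (t : ∀ k, F k ⟶ E.X (k + 1)) (ht : ∀ k, t k ≫ E.d (k + 1) k = b k)
    {m j : ℤ} (h : m = j) : t m ≫ E.d (m + 1) j = eqToHom (congrArg F h) ≫ b j := by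
  subst h; simpa using ht m

/-- The canonical map `GG F ⟶ E` assembled from maps `b k` to cycles and lifts `t k`. -/
noncomputable def pMap (E : Cx A) (F : ℤ → A) (b : ∀ k, F k ⟶ E.X k)
    (t : ∀ k, F k ⟶ E.X (k + 1))
    (hb : ∀ k, b k ≫ E.d k (k - 1) = 0) (ht : ∀ k, t k ≫ E.d (k + 1) k = b k) :
    GG F ⟶ E where
  f n := biprod.desc (t (n - 1) ≫ eqToHom (congrArg E.X (show n - 1 + 1 = n by omega))) (b n)
  comm' i j hij := by
    subst hij
    dsimp only [GG]
    rw [dif_pos rfl]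
    apply biprod.hom_ext'
    · rw [biprod.inl_desc_assoc, assoc,
        eqToHom_d E (show (j : ℤ) + 1 - 1 + 1 = j + 1 by omega) j,
        t_d_eq E F b t ht (show (j + 1 : ℤ) - 1 = j by omega)]
      simp
    · rw [biprod.inr_desc_assoc,
        comp_d_zero E (b (j + 1)) (show (j : ℤ) + 1 - 1 = j by omega) (hb (j + 1))]
      simp

/-- The degreewise kernel complex of a chain map. -/
@[reducible] noncomputable def kerCx {G E : Cx A} (q : G ⟶ E) : Cx A where
  X n := kernel (q.f n)
  d i j := kernel.lift (q.f j) (kernel.ι (q.f i) ≫ G.d i j)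
    (by rw [assoc, ← q.comm i j, ← assoc, kernel.condition, zero_comp])
  shape i j hij := by
    rw [← cancel_mono (kernel.ι (q.f j)), kernel.lift_ι, G.shape i j hij, comp_zero, zero_comp]
  d_comp_d' i j k _ _ := by
    rw [← cancel_mono (kernel.ι (q.f k))]
    simp

/-- The inclusion of the degreewise kernel complex. -/
noncomputable def kerι {G E : Cx A} (q : G ⟶ E) : kerCx q ⟶ G where
  f n := kernel.ι (q.f n)
  comm' i j _ := by simp [kerCx]

lemma kerCx_d_ι {G E : Cx A} (q : G ⟶ E) (i j : ℤ) :
    (kerCx q).d i j ≫ kernel.ι (q.f j) = kernel.ι (q.f i) ≫ G.d i j :=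
  kernel.lift_ι _ _ _

lemma disk_X_eq_of_top (M : A) {n k : ℤ} (h : k = n) : (disk M n).X k = M :=
  if_pos (Or.inl h)

lemma disk_X_eq_of_bot (M : A) {n k : ℤ} (h : k = n - 1) : (disk M n).X k = M :=
  if_pos (Or.inr h)

lemma disk_X_isZero (M : A) {n k : ℤ} (h1 : ¬ k = n) (h2 : ¬ k = n - 1) :
    IsZero ((disk M n).X k) := by
  have : (disk M n).X k = (0 : A) := if_neg (by rintro (h | h) <;> [exact h1 h; exact h2 h])
  rw [this]
  exact isZero_zero A

lemma sigma_ι_f_congr (D : ℤ → Cx A) [HasColimits A] {j j' : ℤ} (h : j = j') (n : ℤ) :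
    (Sigma.ι D j).f n = eqToHom (by rw [h]) ≫ (Sigma.ι D j').f n := by
  subst h; simp


/-- The chain map from the `k`-th disk into `GG F`. -/
noncomputable def uu (F : ℤ → A) (k : ℤ) : disk (F k) (k + 1) ⟶ GG F where
  f n :=
    if h1 : n = k + 1 then
      eqToHom ((disk_X_eq_of_top (F k) h1).trans (congrArg F (show k = n - 1 by omega))) ≫
        biprod.inl
    else if h2 : n = k then
      eqToHom ((disk_X_eq_of_bot (F k) (by omega)).trans (congrArg F h2.symm)) ≫ biprod.inr
    else 0
  comm' i j hij := by
    subst hij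
    by_cases hz : j + 1 = k + 1
    · have hk : k = j := by omega
      subst hk
      dsimp only [GG, disk]
      erw [dif_pos rfl, dif_pos rfl, dif_neg (show ¬(k : ℤ) = k + 1 by omega),
        dif_pos rfl, dif_pos (show (k : ℤ) + 1 = k + 1 ∧ k = k + 1 - 1 from ⟨rfl, by omega⟩)]
      simp [eqToHom_trans_assoc]
      erw [eqToHom_trans_assoc, eqToHom_trans_assoc]
    · by_cases hz2 : j + 1 = k
      · dsimp only [GG, disk]
        erw [dif_pos rfl, dif_neg hz, dif_pos hz2,
          dif_neg (show ¬((j : ℤ) + 1 = k + 1 ∧ j = k + 1 - 1) by rintro ⟨h, -⟩; omega)]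
        simp
      · dsimp only [GG, disk]
        erw [dif_neg hz, dif_neg hz2,
          dif_neg (show ¬((j : ℤ) + 1 = k + 1 ∧ j = k + 1 - 1) by rintro ⟨h, -⟩; omega)]
        simp
        exact zero_comp

/-- The chain map from `GG F` to the coproduct of disks. -/
noncomputable def vv (F : ℤ → A) [HasColimits A] :
    GG F ⟶ ∐ fun n : ℤ => disk (F n) (n + 1) where
  f n := biprod.desc
    (eqToHom (disk_X_eq_of_top (F (n - 1)) (show n = n - 1 + 1 by omega)).symm ≫
      (Sigma.ι (fun m : ℤ => disk (F m) (m + 1)) (n - 1)).f n)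
    (eqToHom (disk_X_eq_of_bot (F n) (show n = n + 1 - 1 by omega)).symm ≫
      (Sigma.ι (fun m : ℤ => disk (F m) (m + 1)) n).f n)
  comm' i j hij := by
    subst hij
    apply biprod.hom_ext'
    · rw [biprod.inl_desc_assoc, assoc,
        (Sigma.ι (fun m : ℤ => disk (F m) (m + 1)) (j + 1 - 1)).comm (j + 1) j]
      have hd : (disk (F (j + 1 - 1)) (j + 1 - 1 + 1)).d (j + 1) j =
          eqToHom (by rw [disk_X_eq_of_top (F (j + 1 - 1)) (show (j:ℤ) + 1 = j + 1 - 1 + 1 by omega),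
            disk_X_eq_of_bot (F (j + 1 - 1)) (show (j:ℤ) = j + 1 - 1 + 1 - 1 by omega)]) := by
        dsimp only [disk]
        rw [dif_pos ⟨by omega, by omega⟩]
      rw [hd, sigma_ι_f_congr (fun m : ℤ => disk (F m) (m + 1))
        (show (j:ℤ) + 1 - 1 = j by omega) j]
      dsimp only [GG]
      rw [dif_pos rfl]
      simp [eqToHom_trans_assoc]
    · rw [biprod.inr_desc_assoc, assoc,
        (Sigma.ι (fun m : ℤ => disk (F m) (m + 1)) (j + 1)).comm (j + 1) j]
      have hd : (disk (F (j + 1)) (j + 1 + 1)).d (j + 1) j = 0 := by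
        dsimp only [disk]
        rw [dif_neg (by rintro ⟨h, -⟩; omega)]
        rfl
      rw [hd]
      dsimp only [GG]
      rw [dif_pos rfl]
      simp

/-- `GG F` is isomorphic to the coproduct of disks. -/
@[reducible] noncomputable def GGIso (F : ℤ → A) [HasColimits A] :
    GG F ≅ ∐ fun n : ℤ => disk (F n) (n + 1) where
  hom := vv F
  inv := Sigma.desc (uu F)
  hom_inv_id := by
    apply HomologicalComplex.hom_ext
    intro n
    rw [HomologicalComplex.comp_f, HomologicalComplex.id_f]
    apply biprod.hom_ext'
    · dsimp only [vv]
      rw [biprod.inl_desc_assoc, assoc]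
      have hcomp : (Sigma.ι (fun m : ℤ => disk (F m) (m + 1)) (n - 1)).f n ≫
          (Sigma.desc (uu F)).f n = (uu F (n - 1)).f n := by
        rw [← HomologicalComplex.comp_f, Sigma.ι_desc]
      rw [hcomp]
      dsimp only [uu]
      rw [dif_pos (show n = n - 1 + 1 by omega)]
      simp [eqToHom_trans_assoc]
    · dsimp only [vv]
      rw [biprod.inr_desc_assoc, assoc]
      have hcomp : (Sigma.ι (fun m : ℤ => disk (F m) (m + 1)) n).f n ≫
          (Sigma.desc (uu F)).f n = (uu F n).f n := by
        rw [← HomologicalComplex.comp_f, Sigma.ι_desc]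
      rw [hcomp]
      dsimp only [uu]
      rw [dif_neg (show ¬ n = n + 1 by omega), dif_pos rfl]
      simp [eqToHom_trans_assoc]
  inv_hom_id := by
    apply Sigma.hom_ext
    intro k
    rw [comp_id, ← assoc, Sigma.ι_desc]
    apply HomologicalComplex.hom_ext
    intro n
    rw [HomologicalComplex.comp_f]
    by_cases h1 : n = k + 1
    · subst h1
      dsimp only [uu, vv]
      rw [dif_pos rfl, assoc, biprod.inl_desc,
        sigma_ι_f_congr (fun m : ℤ => disk (F m) (m + 1))
          (show (k : ℤ) + 1 - 1 = k by omega) (k + 1)]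
      simp [eqToHom_trans_assoc]
    · by_cases h2 : n = k
      · subst h2
        dsimp only [uu, vv]
        rw [dif_neg (show ¬ (n : ℤ) = n + 1 by omega), dif_pos rfl, assoc, biprod.inr_desc]
        simp [eqToHom_trans_assoc]
      · exact (disk_X_isZero (F k) h1 (by omega)).eq_of_src _ _

end Auxiliary

/-- Every right `𝒳`-acyclic complex `E` is an admissible quotient of a
contractible complex of the form `⊕ₙ Dⁿ⁺¹(X'ₙ)` with `X'ₙ ∈ 𝒳`, with right `𝒳`-acyclic
kernel. -/
theorem stmt_12 {A : Type u} [Category.{v} A] [Abelian A] [HasLimits A] [HasColimits A]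
    (𝒳 𝒴 : Set A) (hbp : BalancedPair 𝒳 𝒴) (hadm : Admissible 𝒳 𝒴)
    (E : Cx A) (hE : RightAcyclic 𝒳 E) :
    ∃ (K G : Cx A) (i : K ⟶ G) (p : G ⟶ E),
      ChEExact 𝒳 i p ∧ RightAcyclic 𝒳 K ∧
      ∃ F : ℤ → A, (∀ n : ℤ, F n ∈ 𝒳) ∧
        Nonempty (G ≅ ∐ fun n : ℤ => disk (F n) (n + 1)) := by
  classical
  choose F hF a ha using fun k : ℤ => hbp.contravariantlyFinite (kernel (E.d k (k - 1)))
  have hb : ∀ k : ℤ, (a k ≫ kernel.ι (E.d k (k - 1))) ≫ E.d k (k - 1) = 0 := fun k => by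
    rw [assoc, kernel.condition, comp_zero]
  choose t ht using fun k : ℤ =>
    hE k (hF k) (a k ≫ kernel.ι (E.d k (k - 1))) (hb k)
  let b : ∀ k : ℤ, F k ⟶ E.X k := fun k => a k ≫ kernel.ι (E.d k (k - 1))
  let p : GG F ⟶ E := pMap E F b t hb ht
  have hpf : ∀ n : ℤ, p.f n = biprod.desc
      (t (n - 1) ≫ eqToHom (congrArg E.X (show n - 1 + 1 = n by omega))) (b n) :=
    fun n => rfl
  -- degreewise surjectivity onto `Hom(X, E)` for `X ∈ 𝒳`
  have surj : ∀ (n : ℤ) ⦃X : A⦄, X ∈ 𝒳 → ∀ g : X ⟶ E.X n,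
      ∃ h : X ⟶ (GG F).X n, h ≫ p.f n = g := by
    intro n X hX g
    have hzc : (g ≫ E.d n (n - 1)) ≫ E.d (n - 1) (n - 1 - 1) = 0 := by
      rw [assoc, E.d_comp_d, comp_zero]
    obtain ⟨u, hu⟩ := ha (n - 1) hX
      (kernel.lift (E.d (n - 1) (n - 1 - 1)) (g ≫ E.d n (n - 1)) hzc)
    have h1 : (g - u ≫ t (n - 1) ≫ eqToHom (congrArg E.X (show n - 1 + 1 = n by omega))) ≫
        E.d n (n - 1) = 0 := by
      rw [Preadditive.sub_comp, assoc, assoc,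
        eqToHom_d E (show n - 1 + 1 = n by omega) (n - 1), ht (n - 1)]
      show g ≫ E.d n (n - 1) - u ≫ a (n - 1) ≫ kernel.ι (E.d (n - 1) (n - 1 - 1)) = 0
      rw [← assoc, hu, kernel.lift_ι, sub_self]
    obtain ⟨w, hw⟩ := ha n hX (kernel.lift (E.d n (n - 1)) _ h1)
    refine ⟨biprod.lift u w, ?_⟩
    rw [hpf n, biprod.lift_desc]
    have hwb : w ≫ b n =
        g - u ≫ t (n - 1) ≫ eqToHom (congrArg E.X (show n - 1 + 1 = n by omega)) := by
      show w ≫ a n ≫ kernel.ι (E.d n (n - 1)) = _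
      rw [← assoc, hw, kernel.lift_ι]
    rw [hwb, ← assoc]
    abel
  have hepi : ∀ n : ℤ, Epi (p.f n) := by
    intro n
    obtain ⟨X₀, hX₀, q, hq⟩ := hbp.contravariantlyFinite (E.X n)
    haveI : Epi q := hadm.1 hX₀ q hq
    obtain ⟨h, hh⟩ := surj n hX₀ q
    exact epi_of_epi_fac hh
  refine ⟨kerCx p, GG F, kerι p, p, ?_, ?_, F, hF, ⟨GGIso F⟩⟩
  · -- degreewise `E`-exactness
    intro n
    refine ⟨kernel.condition (p.f n), ?_, fun X hX g => surj n hX g⟩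
    exact { exact := ShortComplex.exact_of_f_is_kernel _ (kernelIsKernel (p.f n)),
            mono_f := by dsimp [kerι]; infer_instance,
            epi_g := hepi n }
  · -- the kernel is right `𝒳`-acyclic
    intro n X hX g hg
    have hgι : (g ≫ kernel.ι (p.f n)) ≫ (GG F).d n (n - 1) = 0 := by
      rw [assoc, ← kerCx_d_ι p n (n - 1), ← assoc, hg, zero_comp]
    have hd : (GG F).d n (n - 1) =
        biprod.fst ≫ eqToHom (congrArg F (show n - 1 = n - 1 by rfl)) ≫ biprod.inr := by
      dsimp only [GG]
      rw [dif_pos (show (n : ℤ) - 1 + 1 = n by omega)]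
    have hfst : (g ≫ kernel.ι (p.f n)) ≫ biprod.fst = 0 := by
      rw [hd, ← assoc, ← assoc] at hgι
      exact zero_of_comp_mono _ (zero_of_comp_mono _ hgι)
    have htot : g ≫ kernel.ι (p.f n) =
        ((g ≫ kernel.ι (p.f n)) ≫ biprod.snd) ≫ biprod.inr := by
      have h4 : (g ≫ kernel.ι (p.f n)) ≫ 𝟙 (F (n - 1) ⊞ F n) = g ≫ kernel.ι (p.f n) :=
        comp_id _
      conv_lhs => rw [← h4, ← biprod.total]
      rw [Preadditive.comp_add, ← assoc, hfst, zero_comp, zero_add, ← assoc]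
    obtain ⟨h', hh'd⟩ : ∃ h' : X ⟶ (GG F).X (n + 1),
        h' ≫ (GG F).d (n + 1) n = g ≫ kernel.ι (p.f n) := by
      refine ⟨((g ≫ kernel.ι (p.f n)) ≫ biprod.snd) ≫
        eqToHom (congrArg F (show n = n + 1 - 1 by omega)) ≫ biprod.inl, ?_⟩
      have hd2 : (GG F).d (n + 1) n =
          biprod.fst ≫ eqToHom (congrArg F (show (n : ℤ) + 1 - 1 = n by omega)) ≫
            biprod.inr := by
        dsimp only [GG]
        rw [dif_pos rfl]
      rw [hd2]
      simp only [assoc, biprod.inl_fst_assoc, eqToHom_trans_assoc, eqToHom_refl, id_comp]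
      rw [← assoc, ← assoc, ← htot]
    have hbd : (h' ≫ p.f (n + 1)) ≫ E.d (n + 1) (n + 1 - 1) = 0 := by
      refine comp_d_zero E _ (show (n : ℤ) = n + 1 - 1 by omega) ?_
      rw [assoc, p.comm (n + 1) n, ← assoc, hh'd, assoc, kernel.condition, comp_zero]
    obtain ⟨u, hu⟩ := hE (n + 1) hX (h' ≫ p.f (n + 1)) hbd
    obtain ⟨v, hv⟩ := surj (n + 1 + 1) hX u
    have hker : (h' - v ≫ (GG F).d (n + 1 + 1) (n + 1)) ≫ p.f (n + 1) = 0 := by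
      rw [Preadditive.sub_comp, assoc, ← p.comm (n + 1 + 1) (n + 1), ← assoc, hv, hu,
        sub_self]
    refine ⟨kernel.lift (p.f (n + 1)) _ hker, ?_⟩
    rw [← cancel_mono (kernel.ι (p.f n)), assoc, kerCx_d_ι, ← assoc, kernel.lift_ι,
      Preadditive.sub_comp, assoc, (GG F).d_comp_d, comp_zero, sub_zero, hh'd]

end Paper
end

section
/- Let (X, Y) be an admissible balanced pair in a complete and cocomplete abelian category A. Then (X̃_E, Ch(A)) is a complete cotorsion pair in the exact category Ch(A, E): the left orthogonal of the class of all complexes (with respect to Ext¹ of Ch(A, E)) is exactly X̃_E, and every complex C admits an admissible epimorphism X ↠ C from X ∈ X̃_E with right X-acyclic kernel in each degree. -/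
open CategoryTheory Category Limits ZeroObject

universe v u

namespace Paper

variable {A : Type u} [Category.{v} A] [Abelian A]

section Aux

variable {A : Type u} [Category.{v} A] [Abelian A]

lemma ra_lift {𝒳 : Set A} {G : Cx A} (hG : RightAcyclic 𝒳 G) {m k : ℤ} (hk : k = m + 1)
    {X' : A} (hX' : X' ∈ 𝒳) (g : X' ⟶ G.X m) (hg : g ≫ G.d m (m - 1) = 0) :
    ∃ h : X' ⟶ G.X k, h ≫ G.d k m = g := by
  subst hk; exact hG m hX' g hg

lemma eqToHom_d_s14 (K : Cx A) {a b : ℤ} (h : a = b) (c : ℤ) :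
    eqToHom (congrArg K.X h) ≫ K.d b c = K.d a c := by
  subst h; simp

lemma eqToHom_f {K L : Cx A} (f : K ⟶ L) {a b : ℤ} (h : a = b) :
    eqToHom (congrArg K.X h) ≫ f.f b = f.f a ≫ eqToHom (congrArg L.X h) := by
  subst h; simp

/-- A complex in `X̃_E` is left `Ext¹`-orthogonal (in `Ch(A,E)`) to everything. -/
lemma xtildeE_ext1vanish {𝒳 : Set A} {G : Cx A} (hG : G ∈ XtildeE 𝒳) (D : Cx A) :
    Ext1ChVanish 𝒳 G D := by
  intro W i p hEE
  obtain ⟨hra, hker⟩ := hG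
  classical
  -- cycle inclusions and the induced epis onto cycles
  let e : ∀ n : ℤ, (kernel (G.d n (n - 1)) : A) ⟶ G.X n := fun n => kernel.ι _
  let q : ∀ n : ℤ, G.X n ⟶ (kernel (G.d (n - 1) (n - 1 - 1)) : A) := fun n =>
    kernel.lift _ (G.d n (n - 1)) (G.d_comp_d _ _ _)
  have hqe : ∀ n : ℤ, q n ≫ e (n - 1) = G.d n (n - 1) := fun n => kernel.lift_ι _ _ _
  have heq : ∀ n : ℤ, e n ≫ q n = 0 := by
    intro n
    rw [← cancel_mono (e (n - 1)), assoc, hqe, zero_comp]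
    exact kernel.condition _
  -- sections of the epis onto cycles, via right acyclicity
  have ht : ∀ n : ℤ, ∃ t : (kernel (G.d n (n - 1)) : A) ⟶ G.X (n + 1),
      t ≫ G.d (n + 1) n = e n :=
    fun n => ra_lift hra rfl (hker n) (e n) (kernel.condition _)
  choose t htd using ht
  -- lifts of these sections through `p`
  have hu : ∀ n : ℤ, ∃ u : (kernel (G.d n (n - 1)) : A) ⟶ W.X (n + 1),
      u ≫ p.f (n + 1) = t n := by
    intro n
    obtain ⟨w, hse, hl⟩ := hEE (n + 1)
    exact hl (hker n) (t n)
  choose u hup using hu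
  -- index-fixing isomorphisms
  let gg : ∀ n : ℤ, G.X (n - 1 + 1) ⟶ G.X n := fun n =>
    eqToHom (congrArg G.X (by omega : n - 1 + 1 = n))
  let ww : ∀ n : ℤ, W.X (n - 1 + 1) ⟶ W.X n := fun n =>
    eqToHom (congrArg W.X (by omega : n - 1 + 1 = n))
  have hggd : ∀ n : ℤ, gg n ≫ G.d n (n - 1) = G.d (n - 1 + 1) (n - 1) := fun n =>
    eqToHom_d_s14 G (by omega : n - 1 + 1 = n) (n - 1)
  have hwwd : ∀ n : ℤ, ww n ≫ W.d n (n - 1) = W.d (n - 1 + 1) (n - 1) := fun n =>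
    eqToHom_d_s14 W (by omega : n - 1 + 1 = n) (n - 1)
  have hwwp : ∀ n : ℤ, ww n ≫ p.f n = p.f (n - 1 + 1) ≫ gg n := fun n =>
    eqToHom_f p (by omega : n - 1 + 1 = n)
  -- retraction onto the cycles
  have hρ0 : ∀ n : ℤ, (𝟙 (G.X n) - q n ≫ (t (n - 1) ≫ gg n)) ≫ G.d n (n - 1) = 0 := by
    intro n
    rw [Preadditive.sub_comp, id_comp, assoc, assoc, hggd n, htd (n - 1), hqe n, sub_self]
  let ρ : ∀ n : ℤ, G.X n ⟶ (kernel (G.d n (n - 1)) : A) := fun n =>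
    kernel.lift _ _ (hρ0 n)
  have hρe : ∀ n : ℤ, ρ n ≫ e n = 𝟙 (G.X n) - q n ≫ (t (n - 1) ≫ gg n) := fun n =>
    kernel.lift_ι _ _ _
  have heρ : ∀ n : ℤ, e n ≫ ρ n = 𝟙 _ := by
    intro n
    rw [← cancel_mono (e n), assoc, hρe, Preadditive.comp_sub, comp_id,
      ← assoc, heq n, zero_comp, sub_zero, id_comp]
  -- the degreewise section of `p`
  let sf : ∀ n : ℤ, G.X n ⟶ W.X n := fun n =>
    q n ≫ (u (n - 1) ≫ ww n) + ρ n ≫ (u n ≫ W.d (n + 1) n)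
  have hsp : ∀ n : ℤ, sf n ≫ p.f n = 𝟙 (G.X n) := by
    intro n
    have h1 : W.d (n + 1) n ≫ p.f n = p.f (n + 1) ≫ G.d (n + 1) n := (p.comm (n + 1) n).symm
    calc sf n ≫ p.f n
        = q n ≫ (u (n - 1) ≫ (ww n ≫ p.f n)) + ρ n ≫ (u n ≫ (W.d (n + 1) n ≫ p.f n)) := by
          simp [sf, Preadditive.add_comp, assoc]
      _ = q n ≫ (t (n - 1) ≫ gg n) + ρ n ≫ e n := by
          rw [hwwp n, h1, ← assoc (u (n - 1)), hup (n - 1), ← assoc (u n), hup n, htd n]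
      _ = 𝟙 (G.X n) := by rw [hρe n]; abel
  have hcomm : ∀ n : ℤ, sf n ≫ W.d n (n - 1) = G.d n (n - 1) ≫ sf (n - 1) := by
    intro n
    have hL : sf n ≫ W.d n (n - 1) = q n ≫ (u (n - 1) ≫ W.d (n - 1 + 1) (n - 1)) := by
      simp only [sf, Preadditive.add_comp, assoc]
      rw [hwwd n, W.d_comp_d, comp_zero, comp_zero, add_zero]
    have hR : G.d n (n - 1) ≫ sf (n - 1) = q n ≫ (u (n - 1) ≫ W.d (n - 1 + 1) (n - 1)) := by
      rw [← hqe n, assoc]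
      congr 1
      simp only [sf, Preadditive.comp_add]
      rw [← assoc (e (n-1)), heq (n - 1), zero_comp, zero_add, ← assoc (e (n-1)), heρ (n - 1),
        id_comp]
    rw [hL, hR]
  let s : G ⟶ W :=
    { f := sf
      comm' := by
        intro n j hnj
        simp only [ComplexShape.down_Rel] at hnj
        obtain rfl : j = n - 1 := by omega
        exact hcomm n }
  -- degreewise retractions
  have hrex : ∀ n : ℤ, ∃ r : W.X n ⟶ D.X n, r ≫ i.f n = 𝟙 (W.X n) - p.f n ≫ sf n := by
    intro n
    obtain ⟨w, hse, _⟩ := hEE n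
    have : Mono (ShortComplex.mk (i.f n) (p.f n) w).f := hse.mono_f
    exact hse.exact.lift' _ (by
      show (𝟙 (W.X n) - p.f n ≫ sf n) ≫ p.f n = 0
      rw [Preadditive.sub_comp, id_comp, assoc, hsp n, comp_id, sub_self])
  choose rf hrf using hrex
  have hiw : ∀ n : ℤ, i.f n ≫ p.f n = 0 := fun n => (hEE n).choose
  have hmono : ∀ n : ℤ, Mono (i.f n) := by
    intro n
    obtain ⟨w, hse, _⟩ := hEE n
    exact hse.mono_f
  refine ⟨{ f := rf, comm' := ?_ }, ?_⟩
  · intro n j hnj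
    simp only [ComplexShape.down_Rel] at hnj
    obtain rfl : j = n - 1 := by omega
    have := hmono (n - 1)
    rw [← cancel_mono (i.f (n - 1))]
    calc (rf n ≫ D.d n (n - 1)) ≫ i.f (n - 1)
        = rf n ≫ (i.f n ≫ W.d n (n - 1)) := by rw [assoc, ← i.comm]
      _ = (𝟙 (W.X n) - p.f n ≫ sf n) ≫ W.d n (n - 1) := by rw [← assoc, hrf n]
      _ = W.d n (n - 1) - p.f n ≫ (G.d n (n - 1) ≫ sf (n - 1)) := by
          rw [Preadditive.sub_comp, id_comp, assoc, hcomm n]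
      _ = W.d n (n - 1) - (W.d n (n - 1) ≫ p.f (n - 1)) ≫ sf (n - 1) := by
          rw [← assoc, p.comm]
      _ = W.d n (n - 1) ≫ (𝟙 (W.X (n - 1)) - p.f (n - 1) ≫ sf (n - 1)) := by
          rw [Preadditive.comp_sub, comp_id, assoc]
      _ = W.d n (n - 1) ≫ (rf (n - 1) ≫ i.f (n - 1)) := by rw [hrf (n - 1)]
      _ = (W.d n (n - 1) ≫ rf (n - 1)) ≫ i.f (n - 1) := by rw [assoc]
  · ext n
    have := hmono n
    show i.f n ≫ rf n = 𝟙 (D.X n)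
    rw [← cancel_mono (i.f n), assoc, hrf n, Preadditive.comp_sub, comp_id,
      ← assoc, hiw n, zero_comp, sub_zero, id_comp]

/-- `X̃_E` is closed under retracts. -/
lemma xtildeE_retract {𝒳 : Set A}
    (hsum : ∀ ⦃X S : A⦄, X ∈ 𝒳 → ∀ (s : S ⟶ X) (r : X ⟶ S), s ≫ r = 𝟙 S → S ∈ 𝒳)
    {G Xc : Cx A} (hX : Xc ∈ XtildeE 𝒳) (s : G ⟶ Xc) (p : Xc ⟶ G) (hsp : s ≫ p = 𝟙 G) :
    G ∈ XtildeE 𝒳 := by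
  obtain ⟨hra, hker⟩ := hX
  have hsp' : ∀ n : ℤ, s.f n ≫ p.f n = 𝟙 (G.X n) := by
    intro n
    rw [← HomologicalComplex.comp_f, hsp, HomologicalComplex.id_f]
  constructor
  · intro n X' hX' g hg
    have h1 : (g ≫ s.f n) ≫ Xc.d n (n - 1) = 0 := by
      rw [assoc, s.comm, ← assoc, hg, zero_comp]
    obtain ⟨h, hh⟩ := hra n hX' (g ≫ s.f n) h1
    refine ⟨h ≫ p.f (n + 1), ?_⟩
    rw [assoc, p.comm, ← assoc, hh, assoc, hsp' n, comp_id]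
  · intro n
    have hc1 : (kernel.ι (G.d n (n - 1)) ≫ s.f n) ≫ Xc.d n (n - 1) = 0 := by
      rw [assoc, s.comm, ← assoc, kernel.condition, zero_comp]
    have hc2 : (kernel.ι (Xc.d n (n - 1)) ≫ p.f n) ≫ G.d n (n - 1) = 0 := by
      rw [assoc, p.comm, ← assoc, kernel.condition, zero_comp]
    refine hsum (hker n) (kernel.lift _ _ hc1) (kernel.lift _ _ hc2) ?_
    rw [← cancel_mono (kernel.ι (G.d n (n - 1))), assoc, kernel.lift_ι, ← assoc,
      kernel.lift_ι, assoc, hsp' n, comp_id, id_comp]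

/-- The special `X̃_E`-precover of an arbitrary complex. -/
lemma xtildeE_precover (𝒳 𝒴 : Set A) (hbp : BalancedPair 𝒳 𝒴) (hadm : Admissible 𝒳 𝒴)
    (C : Cx A) :
    ∃ (K G : Cx A) (i : K ⟶ G) (p : G ⟶ C), G ∈ XtildeE 𝒳 ∧ ChEExact 𝒳 i p := by
  classical
  -- choose right `𝒳`-approximations in every degree
  have happ : ∀ n : ℤ, ∃ X, X ∈ 𝒳 ∧ ∃ f : X ⟶ C.X n, IsRightApprox 𝒳 f := by
    intro n
    obtain ⟨X, hX, f, hf⟩ := hbp.contravariantlyFinite (C.X n)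
    exact ⟨X, hX, f, hf⟩
  choose Xo hXo fex using happ
  choose fo hfo using fex
  have hepi : ∀ n : ℤ, Epi (fo n) := fun n => hadm.1 (hXo n) (fo n) (hfo n)
  -- the complex `⊕ₙ Dⁿ(Xₙ)`
  let Xc : Cx A :=
    { X := fun n => Xo n ⊞ Xo (n + 1)
      d := fun i j =>
        if h : i = j + 1 then biprod.fst ≫ eqToHom (congrArg Xo h) ≫ biprod.inr else 0
      shape := by
        intro i j hij
        rw [dif_neg]
        intro h
        exact hij (by simpa [ComplexShape.down_Rel] using h.symm)
      d_comp_d' := by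
        intro i j k _ _
        split_ifs <;> simp }
  have hXd : ∀ i j : ℤ, ∀ h : i = j + 1,
      Xc.d i j = biprod.fst ≫ eqToHom (congrArg Xo h) ≫ biprod.inr := by
    intro i j h
    exact dif_pos h
  have hXd' : ∀ n : ℤ, Xc.d (n + 1) n = biprod.fst ≫ biprod.inr := by
    intro n
    rw [hXd (n + 1) n rfl]
    simp
  -- the admissible epi `p : Xc ⟶ C`
  let pf : ∀ n : ℤ, Xc.X n ⟶ C.X n := fun n =>
    biprod.desc (fo n) (fo (n + 1) ≫ C.d (n + 1) n)
  have hpcomm : ∀ i j : ℤ, (ComplexShape.down ℤ).Rel i j → pf i ≫ C.d i j = Xc.d i j ≫ pf j := by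
    intro i j hij
    simp only [ComplexShape.down_Rel] at hij
    obtain rfl : i = j + 1 := hij.symm
    rw [hXd' j]
    apply biprod.hom_ext'
    · simp [pf]
    · simp [pf]
  let p : Xc ⟶ C := { f := pf, comm' := hpcomm }
  have hpepi : ∀ n : ℤ, Epi (pf n) := by
    intro n
    have h1 : biprod.inl ≫ pf n = fo n := biprod.inl_desc _ _
    have : Epi (biprod.inl ≫ pf n) := by rw [h1]; exact hepi n
    exact epi_of_epi biprod.inl (pf n)
  -- the kernel complex
  let K : Cx A :=
    { X := fun n => kernel (pf n)
      d := fun i j => kernel.lift (pf j) (kernel.ι (pf i) ≫ Xc.d i j)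
          (by rw [assoc, ← p.comm i j, ← assoc, kernel.condition, zero_comp])
      shape := by
        intro i j hij
        rw [← cancel_mono (kernel.ι (pf j)), kernel.lift_ι, Xc.shape i j hij,
          comp_zero, zero_comp]
      d_comp_d' := by
        intro i j k _ _
        rw [← cancel_mono (kernel.ι (pf k)), assoc, kernel.lift_ι, ← assoc, kernel.lift_ι,
          assoc, Xc.d_comp_d, comp_zero, zero_comp] }
  let i : K ⟶ Xc :=
    { f := fun n => kernel.ι (pf n)
      comm' := fun i j _ => (kernel.lift_ι _ _ _).symm }
  have key : ∀ (n : ℤ) (T : A) (g : T ⟶ Xc.X n),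
      g ≫ Xc.d n (n - 1) = 0 → g ≫ biprod.fst = 0 := by
    intro n T g hg
    rw [hXd n (n - 1) (by omega), ← assoc, ← assoc] at hg
    exact zero_of_comp_mono _ (zero_of_comp_mono _ hg)
  have hdecomp : ∀ (n : ℤ) (T : A) (g : T ⟶ Xc.X n),
      g ≫ biprod.fst = 0 → g ≫ biprod.snd ≫ biprod.inr = g := by
    intro n T g hfst
    have h := biprod.total (X := Xo n) (Y := Xo (n + 1))
    calc g ≫ biprod.snd ≫ biprod.inr
        = g ≫ (biprod.fst ≫ biprod.inl + biprod.snd ≫ biprod.inr) := by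
          rw [Preadditive.comp_add, ← assoc g biprod.fst biprod.inl, hfst, zero_comp, zero_add]
      _ = g := by rw [h, comp_id]
  refine ⟨K, Xc, i, p, ⟨?_, ?_⟩, ?_⟩
  · -- right acyclicity of Xc
    intro n X' hX' g hg
    have hfst : g ≫ biprod.fst = 0 := key n X' g hg
    refine ⟨g ≫ biprod.snd ≫ biprod.inl, ?_⟩
    rw [hXd' n]
    calc (g ≫ biprod.snd ≫ biprod.inl) ≫ biprod.fst ≫ biprod.inr
        = g ≫ biprod.snd ≫ biprod.inr := by simp
      _ = g := hdecomp n X' g hfst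
  · -- cycles of Xc lie in 𝒳
    intro n
    have hc : (biprod.inr : Xo (n + 1) ⟶ Xo n ⊞ Xo (n + 1)) ≫ Xc.d n (n - 1) = 0 := by
      rw [hXd n (n - 1) (by omega), ← assoc, biprod.inr_fst, zero_comp]
    have hιfst : kernel.ι (Xc.d n (n - 1)) ≫ biprod.fst = 0 :=
      key n _ _ (kernel.condition _)
    refine hbp.isoClosedX (hXo (n + 1))
      ⟨kernel.lift _ _ hc, kernel.ι _ ≫ biprod.snd, by simp, ?_⟩
    rw [← cancel_mono (kernel.ι (Xc.d n (n - 1))), assoc, kernel.lift_ι, id_comp, assoc]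
    exact hdecomp n _ (kernel.ι (Xc.d n (n - 1))) hιfst
  · -- degreewise E-exactness
    intro n
    refine ⟨kernel.condition _, ⟨?_, ?_⟩⟩
    · have : Epi (pf n) := hpepi n
      exact
        { exact := ShortComplex.exact_of_f_is_kernel _ (kernelIsKernel (pf n))
          mono_f := inferInstance
          epi_g := this }
    · intro X' hX' g
      obtain ⟨h, hh⟩ := hfo n hX' g
      refine ⟨h ≫ biprod.inl, ?_⟩
      show (h ≫ biprod.inl) ≫ pf n = g
      rw [assoc, biprod.inl_desc, hh]

end Aux

/-- `(X̃_E, Ch(A))` is a complete cotorsion pair in `Ch(A, E)`. -/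
theorem stmt_14 {A : Type u} [Category.{v} A] [Abelian A] [HasLimits A] [HasColimits A]
    (𝒳 𝒴 : Set A) (hbp : BalancedPair 𝒳 𝒴) (hadm : Admissible 𝒳 𝒴) :
    (∀ G : Cx A, G ∈ XtildeE 𝒳 ↔ ∀ D : Cx A, Ext1ChVanish 𝒳 G D) ∧
    (∀ C : Cx A, ∃ (K G : Cx A) (i : K ⟶ G) (p : G ⟶ C),
      G ∈ XtildeE 𝒳 ∧ ChEExact 𝒳 i p) := by
  classical
  refine ⟨?_, xtildeE_precover 𝒳 𝒴 hbp hadm⟩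
  intro G
  constructor
  · intro hG D
    exact xtildeE_ext1vanish hG D
  · intro hext
    obtain ⟨K, Xc, i, p, hXc, hEE⟩ := xtildeE_precover 𝒳 𝒴 hbp hadm G
    obtain ⟨r, hr⟩ := hext K i p hEE
    have hr' : ∀ n : ℤ, i.f n ≫ r.f n = 𝟙 (K.X n) := by
      intro n
      rw [← HomologicalComplex.comp_f, hr, HomologicalComplex.id_f]
    have hiw : ∀ n : ℤ, i.f n ≫ p.f n = 0 := fun n => (hEE n).choose
    have hepi : ∀ n : ℤ, Epi (p.f n) := by
      intro n
      obtain ⟨w, hse, _⟩ := hEE n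
      exact hse.epi_g
    -- degreewise sections of `p` obtained from the retraction `r`
    have hs : ∀ n : ℤ, ∃ sn : G.X n ⟶ Xc.X n,
        p.f n ≫ sn = 𝟙 (Xc.X n) - r.f n ≫ i.f n := by
      intro n
      obtain ⟨w, hse, _⟩ := hEE n
      have : Epi (ShortComplex.mk (i.f n) (p.f n) w).g := hse.epi_g
      exact hse.exact.desc' _ (by
        show i.f n ≫ (𝟙 (Xc.X n) - r.f n ≫ i.f n) = 0
        rw [Preadditive.comp_sub, comp_id, ← assoc, hr' n, id_comp, sub_self])
    choose sf hsf using hs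
    have hsp : ∀ n : ℤ, sf n ≫ p.f n = 𝟙 (G.X n) := by
      intro n
      have := hepi n
      rw [← cancel_epi (p.f n), ← assoc, hsf n, Preadditive.sub_comp, id_comp, assoc,
        hiw n, comp_zero, sub_zero, comp_id]
    have hcomm : ∀ n : ℤ, sf n ≫ Xc.d n (n - 1) = G.d n (n - 1) ≫ sf (n - 1) := by
      intro n
      have := hepi n
      rw [← cancel_epi (p.f n)]
      calc p.f n ≫ sf n ≫ Xc.d n (n - 1)
          = (𝟙 (Xc.X n) - r.f n ≫ i.f n) ≫ Xc.d n (n - 1) := by rw [← assoc, hsf n]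
        _ = Xc.d n (n - 1) - r.f n ≫ (K.d n (n - 1) ≫ i.f (n - 1)) := by
            rw [Preadditive.sub_comp, id_comp, assoc, i.comm]
        _ = Xc.d n (n - 1) - Xc.d n (n - 1) ≫ (r.f (n - 1) ≫ i.f (n - 1)) := by
            rw [← assoc, r.comm, assoc]
        _ = Xc.d n (n - 1) ≫ (𝟙 (Xc.X (n - 1)) - r.f (n - 1) ≫ i.f (n - 1)) := by
            rw [Preadditive.comp_sub, comp_id]
        _ = Xc.d n (n - 1) ≫ (p.f (n - 1) ≫ sf (n - 1)) := by rw [hsf (n - 1)]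
        _ = (p.f n ≫ G.d n (n - 1)) ≫ sf (n - 1) := by rw [← assoc, ← p.comm]
        _ = p.f n ≫ G.d n (n - 1) ≫ sf (n - 1) := by rw [assoc]
    let s : G ⟶ Xc :=
      { f := sf
        comm' := by
          intro n j hnj
          simp only [ComplexShape.down_Rel] at hnj
          obtain rfl : j = n - 1 := by omega
          exact hcomm n }
    have hsps : s ≫ p = 𝟙 G := by
      ext n
      exact hsp n
    exact xtildeE_retract hbp.summandClosedX hXc s p hsps

end Paper
end

section
/- Let (X, Y) be an admissible balanced pair in a complete and cocomplete abelian category A. Then (E-dwX̃, (E-dwX̃)⊥) is a hereditary cotorsion pair in Ch(A, E), where E-dwX̃ is the class of complexes with every term in X. Moreover (E-dwX̃)⊥ coincides with the class of complexes C such that every chain map from a complex with terms in X into C is null homotopic. -/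
open CategoryTheory Category Limits ZeroObject

universe v u

namespace Paper

variable {A : Type u} [Category.{v} A] [Abelian A]

section Lemmas

lemma Xeq (C : Cx A) {a b : ℤ} (h : a = b) : C.X a = C.X b := by rw [h]

lemma eqd (C : Cx A) {a b : ℤ} (h : a = b) (h' : C.X a = C.X b) (c : ℤ) :
    eqToHom h' ≫ C.d b c = C.d a c := by subst h; simp

lemma deq (C : Cx A) (a : ℤ) {b c : ℤ} (h : b = c) (h' : C.X b = C.X c) :
    C.d a b ≫ eqToHom h' = C.d a c := by subst h; simp

lemma eqf {G C : Cx A} (f : G ⟶ C) {a b : ℤ} (h : a = b) (h1 : G.X a = G.X b)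
    (h2 : C.X a = C.X b) : eqToHom h1 ≫ f.f b = f.f a ≫ eqToHom h2 := by subst h; simp

lemma homCongr {P Q : Cx A} (η : ∀ i j : ℤ, P.X i ⟶ Q.X j) {a b : ℤ} (h : a = b)
    (h' : P.X a = P.X b) (c : ℤ) : η a c = eqToHom h' ≫ η b c := by subst h; simp

lemma EExact.w {𝒳 : Set A} {D W C : A} {i : D ⟶ W} {p : W ⟶ C} (h : EExact 𝒳 i p) :
    i ≫ p = 0 := h.choose

lemma EExact.mono {𝒳 : Set A} {D W C : A} {i : D ⟶ W} {p : W ⟶ C} (h : EExact 𝒳 i p) :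
    Mono i := h.choose_spec.1.mono_f

lemma EExact.epi {𝒳 : Set A} {D W C : A} {i : D ⟶ W} {p : W ⟶ C} (h : EExact 𝒳 i p) :
    Epi p := h.choose_spec.1.epi_g

lemma EExact.lift {𝒳 : Set A} {D W C : A} {i : D ⟶ W} {p : W ⟶ C} (h : EExact 𝒳 i p)
    {T : A} (hT : T ∈ 𝒳) (g : T ⟶ C) : ∃ h' : T ⟶ W, h' ≫ p = g :=
  h.choose_spec.2 hT g

lemma EExact.factorThru {𝒳 : Set A} {D W C : A} {i : D ⟶ W} {p : W ⟶ C} (h : EExact 𝒳 i p)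
    {T : A} (q : T ⟶ W) (hq : q ≫ p = 0) : ∃ t : T ⟶ D, t ≫ i = q := by
  have : Mono i := h.mono
  obtain ⟨l, hl⟩ := KernelFork.IsLimit.lift' (h.choose_spec.1.exact.fIsKernel) q hq
  exact ⟨l, hl⟩

lemma eexact_biprod (𝒳 : Set A) (X Y : A) :
    EExact 𝒳 (biprod.inl : X ⟶ X ⊞ Y) (biprod.snd : X ⊞ Y ⟶ Y) := by
  refine ⟨biprod.inl_snd, ?_, fun T hT g => ⟨g ≫ biprod.inr, by simp⟩⟩
  exact ShortComplex.Splitting.shortExact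
    { r := biprod.fst
      s := biprod.inr
      f_r := by simp
      s_g := by simp
      id := by simp [biprod.total] }

/-- The up-shift: `(shUp G).X n = G.X (n+1)` with negated differential. -/
@[simps, reducible] def shUp (G : Cx A) : Cx A where
  X n := G.X (n + 1)
  d a b := -G.d (a + 1) (b + 1)
  shape a b h := by
    rw [G.shape, neg_zero]
    simp only [ComplexShape.down_Rel] at *
    omega
  d_comp_d' a b c _ _ := by simp

lemma shUp_mem_dwX {𝒳 : Set A} {G : Cx A} (hG : G ∈ dwX 𝒳) : shUp G ∈ dwX 𝒳 :=
  fun n => hG (n + 1)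

end Lemmas
section LiftLemma

variable {𝒳 : Set A}

/-- Key lifting lemma: a chain map into the quotient of a degreewise `E`-exact sequence
lifts provided all maps from `shUp G` into the kernel are null homotopic. -/
lemma lift_of_null {Z W Q : Cx A} (i : Z ⟶ W) (p : W ⟶ Q)
    (hEE : ChEExact 𝒳 i p) {G : Cx A} (hG : G ∈ dwX 𝒳) (f : G ⟶ Q)
    (hnull : ∀ u : shUp G ⟶ Z, NullHomotopic u) :
    ∃ g : G ⟶ W, g ≫ p = f := by
  choose s hsp using fun n : ℤ => (hEE n).lift (hG n) (f.f n)
  set τ : ∀ n : ℤ, G.X (n + 1) ⟶ W.X n :=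
    fun n => G.d (n+1) n ≫ s n - s (n+1) ≫ W.d (n+1) n with hτ
  have hτp : ∀ n, τ n ≫ p.f n = 0 := by
    intro n
    have h1 : W.d (n+1) n ≫ p.f n = p.f (n+1) ≫ Q.d (n+1) n := (p.comm (n+1) n).symm
    simp only [hτ, Preadditive.sub_comp, assoc, hsp, h1]
    rw [reassoc_of% (hsp (n+1)), f.comm (n+1) n, sub_self]
  choose θ hθ using fun n : ℤ => (hEE n).factorThru (τ n) (hτp n)
  have hrel : ∀ n : ℤ, (ComplexShape.down ℤ).Rel (n+1) n := by
    intro n; rw [ComplexShape.down_Rel]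
  -- θ assembles into a chain map `shUp G ⟶ Z`
  set Θ : shUp G ⟶ Z :=
    { f := θ
      comm' := by
        intro a b hab
        obtain rfl : a = b + 1 := by rw [ComplexShape.down_Rel] at hab; omega
        have : Mono (i.f b) := (hEE b).mono
        rw [← cancel_mono (i.f b)]
        have h1 : Z.d (b+1) b ≫ i.f b = i.f (b+1) ≫ W.d (b+1) b := (i.comm (b+1) b).symm
        rw [assoc, h1, reassoc_of% (hθ (b+1))]
        simp only [shUp_d, Preadditive.neg_comp, assoc, hθ, hτ]
        simp [Preadditive.sub_comp, Preadditive.comp_sub] } with hΘ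
  obtain ⟨H⟩ := hnull Θ
  set σ : ∀ m : ℤ, G.X m ⟶ Z.X m :=
    fun m => eqToHom (Xeq G (show m = (m-1)+1 by omega) :
      G.X m = (shUp G).X (m-1)) ≫ H.hom (m-1) m with hσ
  have KEY : ∀ n : ℤ, θ n = -(G.d (n + 1) n ≫ σ n) + σ (n + 1) ≫ Z.d (n + 1) n := by
    intro n
    have hc := H.comm n
    rw [dNext_eq H.hom (show (ComplexShape.down ℤ).Rel n (n-1) by
          rw [ComplexShape.down_Rel]; omega),
        prevD_eq H.hom (hrel n)] at hc
    have hz : (0 : shUp G ⟶ Z).f n = 0 := rfl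
    rw [hz, add_zero] at hc
    have h2 : G.d (n + 1) n ≫ σ n = G.d (n + 1) (n - 1 + 1) ≫ H.hom (n - 1) n := by
      simp only [hσ]
      rw [← assoc, deq G (n+1) (show n = (n-1)+1 by omega)]
    have h3 : σ (n + 1) = H.hom n (n + 1) := by
      simp only [hσ]
      rw [homCongr H.hom (show (n:ℤ) = (n+1)-1 by omega)
        (Xeq (shUp G) (show (n:ℤ) = (n+1)-1 by omega)) (n+1)]
    calc θ n = (shUp G).d n (n-1) ≫ H.hom (n-1) n + H.hom n (n+1) ≫ Z.d (n+1) n := hc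
      _ = -(G.d (n + 1) n ≫ σ n) + σ (n + 1) ≫ Z.d (n + 1) n := by
          rw [shUp_d, h2, h3, Preadditive.neg_comp]
  refine ⟨{ f := fun n => s n + σ n ≫ i.f n, comm' := ?_ }, ?_⟩
  · intro a b hab
    obtain rfl : a = b + 1 := by rw [ComplexShape.down_Rel] at hab; omega
    have h1 : i.f (b+1) ≫ W.d (b+1) b = Z.d (b+1) b ≫ i.f b := i.comm (b+1) b
    have h2 : σ (b+1) ≫ Z.d (b+1) b = θ b + G.d (b+1) b ≫ σ b := by
      rw [KEY b]; abel
    simp only [Preadditive.add_comp, Preadditive.comp_add, assoc, h1]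
    rw [← assoc (σ (b+1)), h2]
    simp only [Preadditive.add_comp, assoc, hθ, hτ]
    abel
  · apply HomologicalComplex.hom_ext
    intro n
    have h0 : i.f n ≫ p.f n = 0 := (hEE n).w
    simp [hsp, h0]

end LiftLemma
section NullToPerp

variable {𝒳 : Set A}

/-- If every chain map from a degreewise-`𝒳` complex to `C` is null homotopic,
then `Ext¹(G, C)` vanishes for every `G ∈ dwX`. -/
lemma ext1ChVanish_of_null {C : Cx A}
    (hC : ∀ G ∈ dwX 𝒳, ∀ f : G ⟶ C, NullHomotopic f) {G : Cx A} (hG : G ∈ dwX 𝒳) :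
    Ext1ChVanish 𝒳 G C := by
  intro W i p hEE
  obtain ⟨t, ht⟩ := lift_of_null i p hEE hG (𝟙 G)
    (fun u => hC (shUp G) (shUp_mem_dwX hG) u)
  set q : W ⟶ W := 𝟙 W - p ≫ t with hq
  have hqp : ∀ n, q.f n ≫ p.f n = 0 := by
    intro n
    have h : q ≫ p = 0 := by rw [hq]; simp [Preadditive.sub_comp, ht]
    calc q.f n ≫ p.f n = (q ≫ p).f n := rfl
      _ = 0 := by rw [h]; rfl
  choose r hr using fun n => (hEE n).factorThru (q.f n) (hqp n)
  have hcomm : ∀ (a b : ℤ), (ComplexShape.down ℤ).Rel a b → r a ≫ C.d a b = W.d a b ≫ r b := by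
    intro a b hab
    have : Mono (i.f b) := (hEE b).mono
    rw [← cancel_mono (i.f b)]
    have h1 : C.d a b ≫ i.f b = i.f a ≫ W.d a b := (i.comm a b).symm
    rw [assoc, h1, reassoc_of% (hr a), q.comm a b, assoc, hr b]
  refine ⟨{ f := r, comm' := hcomm }, ?_⟩
  apply HomologicalComplex.hom_ext
  intro n
  have : Mono (i.f n) := (hEE n).mono
  rw [← cancel_mono (i.f n)]
  have h0 : i.f n ≫ p.f n = 0 := (hEE n).w
  have hqf : q.f n = 𝟙 (W.X n) - p.f n ≫ t.f n := by rw [hq]; rfl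
  simp only [HomologicalComplex.comp_f, HomologicalComplex.id_f, assoc, hr n]
  simp [hqf, Preadditive.comp_sub, reassoc_of% h0]

/-- Every chain map into a contractible complex is null homotopic. -/
lemma null_of_contractible {E : Cx A} (h : Contractible E) {X : Cx A} (f : X ⟶ E) :
    NullHomotopic f := by
  obtain ⟨H⟩ := h
  exact ⟨(Homotopy.ofEq (by simp)).trans (((H.compLeft f)).trans (Homotopy.ofEq (by simp)))⟩

lemma disk_X_eq_self (M : A) (n m : ℤ) (h : m = n ∨ m = n - 1) : (disk M n).X m = M :=
  if_pos h

lemma disk_X_eq_zero (M : A) (n m : ℤ) (h : ¬(m = n ∨ m = n - 1)) : (disk M n).X m = 0 :=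
  if_neg h

/-- Disks are contractible. -/
lemma disk_contractible (M : A) (k : ℤ) : Contractible (disk M k) := by
  have hXk : (disk M k).X k = M := disk_X_eq_self M k k (Or.inl rfl)
  have hXk1 : (disk M k).X (k-1) = M := disk_X_eq_self M k (k-1) (Or.inr rfl)
  refine ⟨Homotopy.mk (fun i j => if h : i = k - 1 ∧ j = k then
      eqToHom ((Xeq _ h.1).trans (hXk1.trans (hXk.symm.trans (Xeq _ h.2.symm))))
    else 0) ?_ ?_⟩
  · intro i j hrel
    rw [dif_neg]
    rintro ⟨rfl, rfl⟩
    exact hrel (by rw [ComplexShape.down_Rel]; omega)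
  · intro n
    rw [dNext_eq _ (show (ComplexShape.down ℤ).Rel n (n-1) by rw [ComplexShape.down_Rel]; omega),
        prevD_eq _ (show (ComplexShape.down ℤ).Rel (n+1) n by rw [ComplexShape.down_Rel])]
    try dsimp only
    by_cases h1 : n = k
    · rw [dif_pos (⟨by omega, by omega⟩ : ((n:ℤ) - 1 = k - 1 ∧ n = k))]
      rw [dif_neg (by omega : ¬((n:ℤ) = k - 1 ∧ n + 1 = k))]
      rw [show (disk M k).d n (n-1) =
          eqToHom ((Xeq _ h1).trans (hXk.trans (hXk1.symm.trans (Xeq _ (by omega : (k:ℤ)-1 = n-1)))))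
        from dif_pos ⟨by omega, by omega⟩]
      simp [eqToHom_trans]
    · by_cases h2 : n = k - 1
      · rw [dif_neg (by omega : ¬((n:ℤ) - 1 = k - 1 ∧ n = k))]
        rw [dif_pos (⟨by omega, by omega⟩ : ((n:ℤ) = k - 1 ∧ n + 1 = k))]
        rw [show (disk M k).d (n+1) n =
            eqToHom ((Xeq _ (by omega : (n:ℤ)+1 = k)).trans
              (hXk.trans (hXk1.symm.trans (Xeq _ (by omega : (k:ℤ)-1 = n)))))
          from dif_pos ⟨by omega, by omega⟩]
        simp [eqToHom_trans]
      · rw [dif_neg (by omega : ¬((n:ℤ) - 1 = k - 1 ∧ n = k)),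
            dif_neg (by omega : ¬((n:ℤ) = k - 1 ∧ n + 1 = k))]
        have hz : IsZero ((disk M k).X n) :=
          (isZero_zero A).of_iso (eqToIso (disk_X_eq_zero M k n (by omega)))
        simp only [comp_zero, zero_comp, add_zero, zero_add]
        exact hz.eq_of_src _ _

/-- Disks belong to `(dwX)^⊥`. -/
lemma disk_mem_dwPerp (𝒳 : Set A) (M : A) (k : ℤ) : disk M k ∈ dwPerp 𝒳 :=
  fun _ hG => ext1ChVanish_of_null
    (fun _ _ f => null_of_contractible (disk_contractible M k) f) hG

end NullToPerp
section Cone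

variable {𝒳 : Set A}

/-- The down-shift: `(shDown G).X n = G.X (n-1)` with negated differential. -/
@[simps] def shDown (G : Cx A) : Cx A where
  X n := G.X (n - 1)
  d a b := -G.d (a - 1) (b - 1)
  shape a b h := by
    rw [G.shape, neg_zero]
    simp only [ComplexShape.down_Rel] at *
    omega
  d_comp_d' a b c _ _ := by simp

lemma shDown_mem_dwX {G : Cx A} (hG : G ∈ dwX 𝒳) : shDown G ∈ dwX 𝒳 :=
  fun n => hG (n - 1)

/-- Twisting component for the mapping cone. -/
noncomputable def coneδ {G C : Cx A} (f : G ⟶ C) (i j : ℤ) : G.X (i - 1) ⟶ C.X j :=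
  if h : i - 1 = j then f.f (i - 1) ≫ eqToHom (Xeq C h) else 0

lemma coneδ_pos {G C : Cx A} (f : G ⟶ C) {i j : ℤ} (h : i - 1 = j) :
    coneδ f i j = f.f (i - 1) ≫ eqToHom (Xeq C h) := dif_pos h

lemma coneδ_neg {G C : Cx A} (f : G ⟶ C) {i j : ℤ} (h : ¬(i - 1 = j)) :
    coneδ f i j = 0 := dif_neg h

lemma coneδ_bracket {G C : Cx A} (f : G ⟶ C) (k : ℤ) :
    coneδ f (k+1+1) (k+1) ≫ C.d (k+1) k = G.d (k+1+1-1) (k+1-1) ≫ coneδ f (k+1) k := by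
  rw [coneδ_pos f (show (k+1+1:ℤ) - 1 = k+1 by omega),
      coneδ_pos f (show (k+1:ℤ) - 1 = k by omega)]
  rw [assoc, eqd C (show (k+1+1:ℤ)-1 = k+1 by omega) _ k]
  rw [f.comm (k+1+1-1) k]
  rw [← eqf f (show (k+1:ℤ)-1 = k by omega) (Xeq G (by omega)) (Xeq C (by omega))]
  rw [← assoc, deq G (k+1+1-1) (show (k+1:ℤ)-1 = k by omega)]

/-- The mapping cone of `f : G ⟶ C`, fitting in `0 ⟶ C ⟶ cone f ⟶ shDown G ⟶ 0`. -/
@[reducible] noncomputable def coneX {G C : Cx A} (f : G ⟶ C) : Cx A where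
  X n := C.X n ⊞ G.X (n - 1)
  d i j := biprod.desc (C.d i j ≫ biprod.inl)
    (coneδ f i j ≫ biprod.inl - G.d (i - 1) (j - 1) ≫ biprod.inr)
  shape i j hij := by
    rw [ComplexShape.down_Rel] at hij
    rw [C.shape i j (by rw [ComplexShape.down_Rel]; omega),
        G.shape (i-1) (j-1) (by rw [ComplexShape.down_Rel]; omega),
        coneδ_neg f (by omega)]
    apply biprod.hom_ext' <;> simp
  d_comp_d' i j k hij hjk := by
    rw [ComplexShape.down_Rel] at hij hjk
    obtain rfl : j = k + 1 := by omega
    obtain rfl : i = k + 1 + 1 := by omega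
    apply biprod.hom_ext'
    · simp
    · simp only [biprod.inr_desc_assoc, Preadditive.sub_comp, assoc,
        biprod.inl_desc, biprod.inr_desc, Preadditive.comp_sub, comp_zero,
        HomologicalComplex.d_comp_d_assoc, zero_comp, sub_zero]
      rw [← assoc, ← assoc, coneδ_bracket f k, sub_self]

/-- The inclusion `C ⟶ coneX f`. -/
noncomputable def inlC {G C : Cx A} (f : G ⟶ C) : C ⟶ coneX f where
  f n := biprod.inl
  comm' a b _ := by
    dsimp only [coneX]
    simp

/-- The projection `coneX f ⟶ shDown G`. -/
noncomputable def sndC {G C : Cx A} (f : G ⟶ C) : coneX f ⟶ shDown G where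
  f n := biprod.snd
  comm' a b _ := by
    dsimp only [coneX, shDown]
    apply biprod.hom_ext'
    · simp
    · simp

lemma cone_chEExact {G C : Cx A} (f : G ⟶ C) : ChEExact 𝒳 (inlC f) (sndC f) :=
  fun n => eexact_biprod 𝒳 (C.X n) (G.X (n-1))

/-- Maps from degreewise-`𝒳` complexes into a complex in `dwPerp` are null homotopic. -/
lemma null_of_mem_dwPerp {C : Cx A} (hC : C ∈ dwPerp 𝒳) {G : Cx A} (hG : G ∈ dwX 𝒳)
    (f : G ⟶ C) : NullHomotopic f := by
  obtain ⟨r, hr⟩ := hC (shDown G) (shDown_mem_dwX hG) (inlC f) (sndC f) (cone_chEExact f)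
  have hinl : ∀ m : ℤ, (biprod.inl : C.X m ⟶ C.X m ⊞ G.X (m-1)) ≫ r.f m = 𝟙 (C.X m) := by
    intro m
    calc biprod.inl ≫ r.f m = (inlC f ≫ r).f m := rfl
      _ = 𝟙 (C.X m) := by rw [hr]; rfl
  refine ⟨Homotopy.mk (fun i j => if h : j = i + 1 then
      eqToHom (Xeq G (show i = j - 1 by omega)) ≫ biprod.inr ≫ r.f j else 0) ?_ ?_⟩
  · intro i j hrel
    rw [ComplexShape.down_Rel] at hrel
    rw [dif_neg (by omega)]
  · intro n
    rw [dNext_eq _ (show (ComplexShape.down ℤ).Rel n (n-1) by rw [ComplexShape.down_Rel]; omega),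
        prevD_eq _ (show (ComplexShape.down ℤ).Rel (n+1) n by rw [ComplexShape.down_Rel])]
    try dsimp only
    rw [dif_pos (show (n:ℤ) = (n-1) + 1 by omega), dif_pos rfl]
    have hz : (0 : G ⟶ C).f n = 0 := rfl
    rw [hz, add_zero]
    have hkey : (biprod.inr : G.X (n+1-1) ⟶ C.X (n+1) ⊞ G.X (n+1-1)) ≫ r.f (n+1) ≫ C.d (n+1) n
        = coneδ f (n+1) n - G.d (n+1-1) (n-1) ≫ biprod.inr ≫ r.f n := by
      rw [r.comm (n+1) n]
      dsimp only [coneX]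
      simp [Preadditive.sub_comp, hinl n]
    rw [assoc, assoc, hkey]
    rw [Preadditive.comp_sub]
    have e1 : eqToHom (Xeq G (show (n:ℤ) = (n+1) - 1 by omega)) ≫ coneδ f (n+1) n = f.f n := by
      rw [coneδ_pos f (show (n+1:ℤ) - 1 = n by omega)]
      rw [← assoc, eqf f (show (n:ℤ) = (n+1)-1 by omega) _ (Xeq C (by omega))]
      rw [assoc, eqToHom_trans, eqToHom_refl, comp_id]
    have e2 : eqToHom (Xeq G (show (n:ℤ) = (n+1) - 1 by omega)) ≫ G.d (n+1-1) (n-1)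
        = G.d n (n-1) := eqd G (by omega) _ _
    simp only [← assoc]
    rw [e1, e2]
    simp only [eqToHom_refl, comp_id]
    abel

end Cone
section Part1

variable {𝒳 : Set A}

lemma disk_d_eq (M : A) (nn i j : ℤ) (h : i = nn ∧ j = nn - 1)
    (h' : (disk M nn).X i = (disk M nn).X j) : (disk M nn).d i j = eqToHom h' := by
  show dite _ _ _ = _
  exact dif_pos h

lemma disk_d_zero (M : A) (nn i j : ℤ) (h : ¬(i = nn ∧ j = nn - 1)) :
    (disk M nn).d i j = 0 := dif_neg h

lemma eexact_zero_iso {Z W C : A} (hZ : IsZero Z) (i : Z ⟶ W) (e : W ⟶ C) [IsIso e] :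
    EExact 𝒳 i e := by
  have hi : i = 0 := hZ.eq_of_src i 0
  refine ⟨by rw [hi, zero_comp], ?_, fun T hT g => ⟨g ≫ inv e, by simp⟩⟩
  exact ShortComplex.Splitting.shortExact
    { r := 0
      s := inv e
      f_r := hZ.eq_of_src _ _
      s_g := by simp
      id := by simp [hi] }

lemma EExact.conj {D W C D' W' C' : A} {i : D ⟶ W} {p : W ⟶ C} (h : EExact 𝒳 i p)
    (e1 : D' = D) (e2 : W = W') (e3 : C = C') :
    EExact 𝒳 (eqToHom e1 ≫ i ≫ eqToHom e2) (eqToHom e2.symm ≫ p ≫ eqToHom e3) := by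
  subst e1; subst e2; subst e3
  simpa using h

lemma eexact_pullback {K XX Y Z : A} {k : K ⟶ XX} {f : XX ⟶ Z} (a : Y ⟶ Z)
    (h : EExact 𝒳 k f) :
    EExact 𝒳 (pullback.lift (0 : K ⟶ Y) k (by simp [h.w]) : K ⟶ pullback a f)
      (pullback.fst a f) := by
  haveI := h.epi
  haveI := h.mono
  have hw : pullback.lift (0 : K ⟶ Y) k (by simp [h.w]) ≫ pullback.fst a f = 0 :=
    pullback.lift_fst _ _ _
  have hmono : Mono (pullback.lift (0 : K ⟶ Y) k (by simp [h.w]) : K ⟶ pullback a f) := by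
    have : Mono ((pullback.lift (0 : K ⟶ Y) k (by simp [h.w]) : K ⟶ pullback a f) ≫ pullback.snd a f) := by
      rw [pullback.lift_snd]; infer_instance
    exact mono_of_mono _ (pullback.snd a f)
  have hexact : (ShortComplex.mk _ _ hw).Exact := by
    apply ShortComplex.exact_of_f_is_kernel
    refine KernelFork.IsLimit.ofι _ _
      (fun {T} t ht => ((h.factorThru (t ≫ pullback.snd a f)) (by
        rw [assoc, ← pullback.condition, ← assoc, ht, zero_comp])).choose) ?_ ?_
    · intro T t ht
      apply pullback.hom_ext
      · simp [ht, pullback.lift_fst, pullback.lift_snd, pullback.lift_fst_assoc, pullback.lift_snd_assoc]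
      · have := ((h.factorThru (t ≫ pullback.snd a f)) (by
          rw [assoc, ← pullback.condition, ← assoc, ht, zero_comp])).choose_spec
        simp [this, pullback.lift_fst, pullback.lift_snd, pullback.lift_fst_assoc, pullback.lift_snd_assoc]
    · intro T t ht m hm
      have hm2 := ((h.factorThru (t ≫ pullback.snd a f)) (by
        rw [assoc, ← pullback.condition, ← assoc, ht, zero_comp])).choose_spec
      have : Mono k := h.mono
      rw [← cancel_mono k]
      rw [hm2, ← hm]
      simp [pullback.lift_fst, pullback.lift_snd, pullback.lift_fst_assoc, pullback.lift_snd_assoc]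
  have hepi : Epi (pullback.fst a f) := Abelian.epi_pullback_of_epi_g a f
  refine ⟨hw, @ShortComplex.ShortExact.mk _ _ _ _ hexact hmono hepi, ?_⟩
  intro T hT g
  obtain ⟨ℓ, hℓ⟩ := h.lift hT (g ≫ a)
  exact ⟨pullback.lift g ℓ hℓ.symm, pullback.lift_fst _ _ _⟩

variable (G : Cx A) (n : ℤ) {XX : A} (f : XX ⟶ G.X n)

/-- Objects of the modified complex. -/
noncomputable def WOb (m : ℤ) : A :=
  if m = n + 1 then pullback (G.d (n+1) n) f else if m = n then XX else G.X m

lemma WOb_P (m : ℤ) (h : m = n + 1) : WOb G n f m = pullback (G.d (n+1) n) f := if_pos h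

lemma WOb_X (m : ℤ) (h : m = n) (h' : ¬ m = n + 1) : WOb G n f m = XX := by
  show (if _ then _ else _) = XX
  rw [if_neg h', if_pos h]

lemma WOb_G (m : ℤ) (h1 : ¬ m = n + 1) (h2 : ¬ m = n) : WOb G n f m = G.X m := by
  show (if _ then _ else _) = G.X m
  rw [if_neg h1, if_neg h2]

/-- The modified complex `W` fitting in `0 ⟶ Dⁿ⁺¹K ⟶ W ⟶ G ⟶ 0`. -/
@[reducible] noncomputable def Wcx : Cx A where
  X := WOb G n f
  d i j :=
    if hij : i = j + 1 then
      if h1 : j = n + 1 then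
        eqToHom (WOb_G G n f i (by omega) (by omega)) ≫
          pullback.lift (G.d i (n+1)) 0 (by simp) ≫ eqToHom (WOb_P G n f j h1).symm
      else if h2 : j = n then
        eqToHom (WOb_P G n f i (by omega)) ≫ pullback.snd (G.d (n+1) n) f ≫
          eqToHom (WOb_X G n f j h2 (by omega)).symm
      else if h3 : i = n then
        eqToHom (WOb_X G n f i h3 (by omega)) ≫ f ≫ G.d n j ≫
          eqToHom (WOb_G G n f j (by omega) (by omega)).symm
      else
        eqToHom (WOb_G G n f i (by omega) (by omega)) ≫ G.d i j ≫
          eqToHom (WOb_G G n f j (by omega) (by omega)).symm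
    else 0
  shape i j hij := by
    rw [ComplexShape.down_Rel] at hij
    exact dif_neg (by omega)
  d_comp_d' i j k hij hjk := by
    rw [ComplexShape.down_Rel] at hij hjk
    obtain rfl : j = k + 1 := by omega
    obtain rfl : i = k + 1 + 1 := by omega
    rw [dif_pos rfl, dif_pos rfl]
    by_cases hk1 : k = n + 1
    · subst hk1
      rw [dif_neg (by omega), dif_neg (by omega), dif_neg (by omega), dif_pos rfl]
      have hc : G.d (n+1+1+1) (n+1+1) ≫ pullback.lift (G.d (n+1+1) (n+1)) 0
          (by simp : G.d (n+1+1) (n+1) ≫ G.d (n+1) n = 0 ≫ f) = 0 := by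
        apply pullback.hom_ext <;> simp [pullback.lift_fst, pullback.lift_snd, pullback.lift_fst_assoc, pullback.lift_snd_assoc]
      simp [reassoc_of% hc]
    · by_cases hk0 : k = n
      · subst hk0
        rw [dif_pos rfl, dif_neg (by omega), dif_pos rfl]
        simp [pullback.lift_fst, pullback.lift_snd, pullback.lift_fst_assoc, pullback.lift_snd_assoc]
      · by_cases hkm : k = n - 1
        · obtain rfl : n = k + 1 := by omega
          rw [dif_neg (by omega), dif_pos rfl, dif_neg (by omega), dif_neg (by omega),
              dif_pos rfl]
          have hc : pullback.snd (G.d (k+1+1) (k+1)) f ≫ f ≫ G.d (k+1) k = 0 := by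
            rw [← assoc, ← pullback.condition, assoc, HomologicalComplex.d_comp_d, comp_zero]
          simp [reassoc_of% hc, hc]
        · by_cases hkm2 : k = n - 2
          · obtain rfl : n = k + 2 := by omega
            rw [dif_neg (by omega), dif_neg (by omega), dif_pos (by omega),
                dif_neg (by omega), dif_neg (by omega), dif_neg (by omega)]
            simp
          · rw [dif_neg (by omega), dif_neg (by omega), dif_neg (by omega),
                dif_neg (by omega), dif_neg (by omega), dif_neg (by omega)]
            simp

end Part1
section Part1b

variable {𝒳 : Set A}
variable (G : Cx A) (n : ℤ) {XX : A} (f : XX ⟶ G.X n)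

/-- The projection `W ⟶ G`. -/
noncomputable def Wπ : Wcx G n f ⟶ G where
  f m :=
    if h1 : m = n + 1 then
      eqToHom (WOb_P G n f m h1) ≫ pullback.fst (G.d (n+1) n) f ≫
        eqToHom (Xeq G (by omega : n + 1 = m))
    else if h2 : m = n then
      eqToHom (WOb_X G n f m h2 h1) ≫ f ≫ eqToHom (Xeq G (by omega : n = m))
    else
      eqToHom (WOb_G G n f m h1 h2)
  comm' i j hrel := by
    rw [ComplexShape.down_Rel] at hrel
    obtain rfl : i = j + 1 := by omega
    show _ ≫ G.d (j+1) j = (Wcx G n f).d (j+1) j ≫ _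
    dsimp only [Wcx]
    rw [dif_pos rfl]
    by_cases h1 : j = n + 1
    · subst h1
      rw [dif_neg (show ¬(n:ℤ)+1+1 = n+1 by omega), dif_neg (show ¬(n:ℤ)+1+1 = n by omega),
          dif_pos (show (n:ℤ)+1 = n+1 from rfl), dif_pos (show (n:ℤ)+1 = n+1 from rfl)]
      simp [pullback.lift_fst, pullback.lift_snd, pullback.lift_fst_assoc, pullback.lift_snd_assoc]
    · by_cases h2 : j = n
      · subst h2
        rw [dif_pos (show (j:ℤ)+1 = j+1 from rfl), dif_neg (show ¬(j:ℤ) = j+1 by omega),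
            dif_pos (show (j:ℤ) = j from rfl), dif_neg (show ¬(j:ℤ) = j+1 by omega),
            dif_pos (show (j:ℤ) = j from rfl)]
        simp [pullback.condition]
      · by_cases h3 : j + 1 = n
        · obtain rfl : n = j + 1 := by omega
          rw [dif_neg (show ¬(j:ℤ)+1 = j+1+1 by omega), dif_pos (show (j:ℤ)+1 = j+1 from rfl),
              dif_neg (show ¬(j:ℤ) = j+1+1 by omega), dif_neg (show ¬(j:ℤ) = j+1 by omega),
              dif_pos (show (j:ℤ)+1 = j+1 from rfl),
              dif_neg (show ¬(j:ℤ) = j+1+1 by omega), dif_neg (show ¬(j:ℤ) = j+1 by omega)]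
          simp
        · rw [dif_neg (show ¬(j:ℤ)+1 = n+1 by omega), dif_neg (show ¬(j:ℤ)+1 = n by omega),
              dif_neg (show ¬(j:ℤ) = n+1 by omega), dif_neg (show ¬(j:ℤ) = n by omega),
              dif_neg (show ¬(j:ℤ)+1 = n by omega),
              dif_neg (show ¬(j:ℤ) = n+1 by omega), dif_neg (show ¬(j:ℤ) = n by omega)]
          simp

/-- The inclusion `Dⁿ⁺¹K ⟶ W`. -/
noncomputable def Wκ {K : A} (k : K ⟶ XX) (hkf : k ≫ f = 0) : disk K (n+1) ⟶ Wcx G n f where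
  f m :=
    if h1 : m = n + 1 then
      eqToHom (disk_X_eq_self K (n+1) m (Or.inl h1)) ≫
        pullback.lift (0 : K ⟶ G.X (n+1)) k (by simp [hkf]) ≫
        eqToHom (WOb_P G n f m h1).symm
    else if h2 : m = n then
      eqToHom (disk_X_eq_self K (n+1) m (Or.inr (by omega))) ≫ k ≫
        eqToHom (WOb_X G n f m h2 h1).symm
    else 0
  comm' i j hrel := by
    rw [ComplexShape.down_Rel] at hrel
    obtain rfl : i = j + 1 := by omega
    show _ ≫ (Wcx G n f).d (j+1) j = (disk K (n+1)).d (j+1) j ≫ _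
    dsimp only [Wcx]
    rw [dif_pos rfl]
    by_cases h1 : j = n + 1
    · subst h1
      rw [dif_neg (show ¬(n:ℤ)+1+1 = n+1 by omega), dif_neg (show ¬(n:ℤ)+1+1 = n by omega),
          disk_d_zero K (n+1) (n+1+1) (n+1) (by omega)]
      simp
    · by_cases h2 : j = n
      · subst h2
        rw [dif_pos (show (j:ℤ)+1 = j+1 from rfl), dif_neg (show ¬(j:ℤ) = j+1 by omega),
            dif_pos (show (j:ℤ) = j from rfl),
            disk_d_eq K (j+1) (j+1) j ⟨rfl, by omega⟩
              ((disk_X_eq_self K (j+1) (j+1) (Or.inl rfl)).trans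
                (disk_X_eq_self K (j+1) j (Or.inr (by omega))).symm),
            dif_neg (show ¬(j:ℤ) = j+1 by omega), dif_pos (show (j:ℤ) = j from rfl)]
        simp [pullback.lift_fst, pullback.lift_snd, pullback.lift_fst_assoc, pullback.lift_snd_assoc]
      · by_cases h3 : j + 1 = n
        · obtain rfl : n = j + 1 := by omega
          rw [dif_neg (show ¬(j:ℤ)+1 = j+1+1 by omega), dif_pos (show (j:ℤ)+1 = j+1 from rfl),
              dif_neg (show ¬(j:ℤ) = j+1+1 by omega), dif_neg (show ¬(j:ℤ) = j+1 by omega),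
              dif_pos (show (j:ℤ)+1 = j+1 from rfl),
              disk_d_zero K (j+1+1) (j+1) j (by omega),
              dif_neg (show ¬(j:ℤ) = j+1+1 by omega), dif_neg (show ¬(j:ℤ) = j+1 by omega)]
          simp [reassoc_of% hkf]
        · rw [dif_neg (show ¬(j:ℤ)+1 = n+1 by omega), dif_neg (show ¬(j:ℤ)+1 = n by omega),
              disk_d_zero K (n+1) (j+1) j (by omega),
              dif_neg (show ¬(j:ℤ) = n+1 by omega), dif_neg (show ¬(j:ℤ) = n by omega)]
          simp

end Part1b
section Part1c

variable {𝒳 : Set A}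
variable (G : Cx A) (n : ℤ) {XX : A} (f : XX ⟶ G.X n)

lemma Wch {K : A} (k : K ⟶ XX) (hkf : k ≫ f = 0) (hEE : EExact 𝒳 k f) :
    ChEExact 𝒳 (Wκ G n f k hkf) (Wπ G n f) := by
  intro m
  dsimp only [Wκ, Wπ]
  by_cases h1 : m = n + 1
  · rw [dif_pos h1, dif_pos h1]
    exact (eexact_pullback (G.d (n+1) n) hEE).conj
      (disk_X_eq_self K (n+1) m (Or.inl h1)) (WOb_P G n f m h1).symm (Xeq G (by omega))
  · by_cases h2 : m = n
    · rw [dif_neg h1, dif_pos h2, dif_neg h1, dif_pos h2]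
      exact hEE.conj (disk_X_eq_self K (n+1) m (Or.inr (by omega)))
        (WOb_X G n f m h2 h1).symm (Xeq G (by omega))
    · rw [dif_neg h1, dif_neg h2, dif_neg h1, dif_neg h2]
      exact eexact_zero_iso
        ((isZero_zero A).of_iso (eqToIso (disk_X_eq_zero K (n+1) m (by omega)))) _ _

lemma retraction_of_perp {K : A} (k : K ⟶ XX) (hEE : EExact 𝒳 k f)
    (hvan : Ext1ChVanish 𝒳 G (disk K (n+1))) : ∃ ρ : XX ⟶ K, k ≫ ρ = 𝟙 K := by
  obtain ⟨r, hr⟩ := hvan (Wκ G n f k hEE.w) (Wπ G n f) (Wch G n f k hEE.w hEE)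
  set e1 := disk_X_eq_self K (n+1) n (Or.inr (by omega)) with he1
  set e2 := (WOb_X G n f n rfl (by omega)).symm with he2
  have hκn : (Wκ G n f k hEE.w).f n = eqToHom e1 ≫ k ≫ eqToHom e2 := by
    dsimp only [Wκ]
    rw [dif_neg (by omega), dif_pos rfl]
  have h5 : eqToHom e1 ≫ k ≫ eqToHom e2 ≫ r.f n = 𝟙 ((disk K (n+1)).X n) := by
    have : (Wκ G n f k hEE.w ≫ r).f n = (𝟙 (disk K (n+1))).f n := by rw [hr]
    calc eqToHom e1 ≫ k ≫ eqToHom e2 ≫ r.f n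
        = ((Wκ G n f k hEE.w).f n) ≫ r.f n := by rw [hκn]; simp
      _ = (Wκ G n f k hEE.w ≫ r).f n := rfl
      _ = (𝟙 (disk K (n+1))).f n := this
      _ = 𝟙 _ := rfl
  refine ⟨eqToHom e2 ≫ r.f n ≫ eqToHom e1, ?_⟩
  have h6 : k ≫ eqToHom e2 ≫ r.f n ≫ eqToHom e1
      = eqToHom e1.symm ≫ (eqToHom e1 ≫ k ≫ eqToHom e2 ≫ r.f n) ≫ eqToHom e1 := by
    simp
  rw [h6, h5]
  simp

lemma split_of_retraction {K M : A} {k : K ⟶ XX} {g : XX ⟶ M} (hEE : EExact 𝒳 k g)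
    (ρ : XX ⟶ K) (hρ : k ≫ ρ = 𝟙 K) : ∃ s : M ⟶ XX, s ≫ g = 𝟙 M := by
  haveI := hEE.epi
  haveI := hEE.mono
  have hco := hEE.choose_spec.1.exact.gIsCokernel
  have hzero : k ≫ (𝟙 XX - ρ ≫ k) = 0 := by
    simp [Preadditive.comp_sub, reassoc_of% hρ]
  obtain ⟨s, hs⟩ := CokernelCofork.IsColimit.desc' hco (𝟙 XX - ρ ≫ k) hzero
  rw [Cofork.π_ofπ] at hs
  refine ⟨s, ?_⟩
  rw [← cancel_epi g, ← assoc, hs]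
  simp [Preadditive.sub_comp, reassoc_of% hEE.w, hEE.w]

/-- Part 1, forward direction. -/
lemma mem_dwX_of_perp {𝒴 : Set A} (hbp : BalancedPair 𝒳 𝒴) (hadm : Admissible 𝒳 𝒴)
    {G : Cx A} (h : ∀ C ∈ dwPerp 𝒳, Ext1ChVanish 𝒳 G C) : G ∈ dwX 𝒳 := by
  intro n
  obtain ⟨X0, hX, f, hap⟩ := hbp.contravariantlyFinite (G.X n)
  haveI hepi : Epi f := hadm.1 hX f hap
  have hw : kernel.ι f ≫ f = 0 := kernel.condition f
  have hex : (ShortComplex.mk (kernel.ι f) f hw).Exact :=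
    ShortComplex.exact_of_f_is_kernel _ (kernelIsKernel f)
  have hmono : Mono (ShortComplex.mk (kernel.ι f) f hw).f := by dsimp; infer_instance
  have hepi' : Epi (ShortComplex.mk (kernel.ι f) f hw).g := by dsimp; exact hepi
  have hEE : EExact 𝒳 (kernel.ι f) f :=
    ⟨hw, @ShortComplex.ShortExact.mk _ _ _ _ hex hmono hepi', fun T hT g => hap hT g⟩
  obtain ⟨ρ, hρ⟩ := retraction_of_perp G n f (kernel.ι f) hEE
    (h _ (disk_mem_dwPerp 𝒳 (kernel f) (n+1)))
  obtain ⟨s, hs⟩ := split_of_retraction hEE ρ hρ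
  exact hbp.summandClosedX hX s f hs

/-- Part 2: `dwX` is closed under kernels of degreewise `E`-admissible epis. -/
lemma part2 {𝒴 : Set A} (hbp : BalancedPair 𝒳 𝒴) {G' G G'' : Cx A} (i : G' ⟶ G) (p : G ⟶ G'')
    (hEE : ChEExact 𝒳 i p) (hG : G ∈ dwX 𝒳) (hG'' : G'' ∈ dwX 𝒳) : G' ∈ dwX 𝒳 := by
  intro n
  obtain ⟨s, hs⟩ := (hEE n).lift (hG'' n) (𝟙 (G''.X n))
  have hq : (𝟙 (G.X n) - p.f n ≫ s) ≫ p.f n = 0 := by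
    simp [Preadditive.sub_comp, hs]
  obtain ⟨r, hr⟩ := (hEE n).factorThru _ hq
  have : Mono (i.f n) := (hEE n).mono
  have hir : i.f n ≫ r = 𝟙 (G'.X n) := by
    rw [← cancel_mono (i.f n), assoc, hr]
    simp [Preadditive.comp_sub, reassoc_of% (hEE n).w]
  exact hbp.summandClosedX (hG n) (i.f n) r hir

/-- Part 3: `dwPerp` is closed under cokernels of degreewise `E`-admissible monos. -/
lemma part3 {C' C C'' : Cx A} (i : C' ⟶ C) (p : C ⟶ C'') (hEE : ChEExact 𝒳 i p)
    (h1 : C' ∈ dwPerp 𝒳) (h2 : C ∈ dwPerp 𝒳) : C'' ∈ dwPerp 𝒳 := by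
  intro G hG
  apply ext1ChVanish_of_null ?_ hG
  intro T hT g
  obtain ⟨g', hg'⟩ := lift_of_null i p hEE hT g
    (fun u => null_of_mem_dwPerp h1 (shUp_mem_dwX hT) u)
  obtain ⟨H⟩ := null_of_mem_dwPerp h2 hT g'
  exact ⟨(Homotopy.ofEq hg'.symm).trans ((H.compRight p).trans (Homotopy.ofEq (by simp)))⟩

end Part1c

/-- `(E-dw X̃, (E-dw X̃)^⊥)` is a hereditary cotorsion pair in `Ch(A, E)`,
and `(E-dw X̃)^⊥` consists exactly of the complexes into which all maps from degreewise-`𝒳`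
complexes are null homotopic. -/
theorem stmt_15 {A : Type u} [Category.{v} A] [Abelian A] [HasLimits A] [HasColimits A]
    (𝒳 𝒴 : Set A) (hbp : BalancedPair 𝒳 𝒴) (hadm : Admissible 𝒳 𝒴) :
    (∀ G : Cx A, (∀ C ∈ dwPerp 𝒳, Ext1ChVanish 𝒳 G C) ↔ G ∈ dwX 𝒳) ∧
    (∀ ⦃G' G G'' : Cx A⦄ (i : G' ⟶ G) (p : G ⟶ G''), ChEExact 𝒳 i p →
      G ∈ dwX 𝒳 → G'' ∈ dwX 𝒳 → G' ∈ dwX 𝒳) ∧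
    (∀ ⦃C' C C'' : Cx A⦄ (i : C' ⟶ C) (p : C ⟶ C''), ChEExact 𝒳 i p →
      C' ∈ dwPerp 𝒳 → C ∈ dwPerp 𝒳 → C'' ∈ dwPerp 𝒳) ∧
    (∀ C : Cx A, C ∈ dwPerp 𝒳 ↔ ∀ G ∈ dwX 𝒳, ∀ f : G ⟶ C, NullHomotopic f) := by
  refine ⟨fun G => ⟨fun h => mem_dwX_of_perp hbp hadm h, fun hG C hC => hC G hG⟩,
    fun G' G G'' i p hEE hG hG'' => part2 hbp i p hEE hG hG'',
    fun C' C C'' i p hEE h1 h2 => part3 i p hEE h1 h2,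
    fun C => ⟨fun hC G hG f => null_of_mem_dwPerp hC hG f,
      fun h G hG => ext1ChVanish_of_null h hG⟩⟩

end Paper
end
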